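/- arXiv:2005.10942 — 6 statements merged into one kernel-verified Lean document; each statement's English description precedes it below -/
import Mathlib

section
/- Let X be a real Hilbert space, let Z ⊂ X be a closed connected set, and let r > 0. Then Z is r-prox-regular if and only if for every y ∈ X such that d := dist(y, Z) < r there exists a unique x ∈ Z such that |y − x| = d and ⟨y − x, x − z⟩ + (|y − x|/(2r))·|x − z|² ≥ 0 for all z ∈ Z. -/
open MeasureTheory Set Filter Metric
open scoped RealInnerProductSpace Topology

/-- A set `Z` is `r`-prox-regular: every point `y` whose distance `d` to `Z` lies in
`(0, r)` admits a point `x ∈ Z` with `dist (x + (r/d)•(y-x), Z) = (r/d)‖y-x‖ = r`. -/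
def ProxRegular {X : Type*} [NormedAddCommGroup X] [InnerProductSpace ℝ X]
    (Z : Set X) (r : ℝ) : Prop :=
  ∀ y : X, infDist y Z ∈ Ioo 0 r →
    ∃ x ∈ Z, infDist (x + (r / infDist y Z) • (y - x)) Z = r ∧
      (r / infDist y Z) * ‖y - x‖ = r

/-- Uniqueness part: any two points of `Z` at distance `d = infDist y Z < r` from `y`
satisfying the variational inequality coincide. -/
lemma prox_uniq_aux {X : Type*} [NormedAddCommGroup X] [InnerProductSpace ℝ X]
    (Z : Set X) (r : ℝ) (hr : 0 < r) (y : X) (hyd : infDist y Z < r) (x x' : X)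
    (hx : x ∈ Z ∧ ‖y - x‖ = infDist y Z ∧
      ∀ z ∈ Z, ⟪y - x, x - z⟫ + ‖y - x‖ / (2 * r) * ‖x - z‖ ^ 2 ≥ 0)
    (hx' : x' ∈ Z ∧ ‖y - x'‖ = infDist y Z ∧
      ∀ z ∈ Z, ⟪y - x', x' - z⟫ + ‖y - x'‖ / (2 * r) * ‖x' - z‖ ^ 2 ≥ 0) :
    x' = x := by
  set d := infDist y Z with hd
  obtain ⟨hxZ, hnx, hix⟩ := hx
  obtain ⟨hx'Z, hnx', hix'⟩ := hx'
  have A1 := hix' x hxZ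
  have A2 := hix x' hx'Z
  rw [hnx'] at A1
  rw [hnx] at A2
  have e1 : x - x' = -(x' - x) := by abel
  rw [e1, inner_neg_right, norm_neg] at A2
  have e2 : ⟪y - x', x' - x⟫ = ⟪y - x, x' - x⟫ - ‖x' - x‖ ^ 2 := by
    have h : y - x' = (y - x) - (x' - x) := by abel
    rw [h, inner_sub_left, real_inner_self_eq_norm_sq]
  rw [e2] at A1
  have hN : ‖x' - x‖ ^ 2 ≤ 2 * (d / (2 * r)) * ‖x' - x‖ ^ 2 := by linarith
  have h6 : 2 * (d / (2 * r)) = d / r := by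
    field_simp
  have h7 : d / r < 1 := (div_lt_one hr).2 hyd
  have hN0 : ‖x' - x‖ ^ 2 ≤ 0 := by
    rw [h6] at hN
    nlinarith [hN, h7]
  have h8 : ‖x' - x‖ ^ 2 = 0 := le_antisymm hN0 (sq_nonneg _)
  have h9 : ‖x' - x‖ = 0 := sq_eq_zero_iff.mp h8
  simpa [sub_eq_zero] using norm_eq_zero.mp h9

/-- A closed connected set `Z` in a real Hilbert space is `r`-prox-regular if and only if
for every `y` with `d := dist(y,Z) < r` there is a unique `x ∈ Z` with `‖y - x‖ = d` and
`⟪y - x, x - z⟫ + (‖y - x‖/(2r))‖x - z‖² ≥ 0` for all `z ∈ Z`. -/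
theorem prox_regular_iff_unique_proj
    {X : Type*} [NormedAddCommGroup X] [InnerProductSpace ℝ X] [CompleteSpace X]
    (Z : Set X) (hZclosed : IsClosed Z) (hZconn : IsConnected Z)
    (r : ℝ) (hr : 0 < r) :
    ProxRegular Z r ↔
      ∀ y : X, infDist y Z < r →
        ∃! x : X, x ∈ Z ∧ ‖y - x‖ = infDist y Z ∧
          ∀ z ∈ Z, ⟪y - x, x - z⟫ + ‖y - x‖ / (2 * r) * ‖x - z‖ ^ 2 ≥ 0 := by
  have hZne : Z.Nonempty := hZconn.nonempty
  constructor
  · intro hpr y hyd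
    rcases eq_or_lt_of_le (infDist_nonneg : (0:ℝ) ≤ infDist y Z) with hd0 | hd0
    · -- d = 0 : y ∈ Z, take x = y
      have hy : y ∈ Z := (hZclosed.mem_iff_infDist_zero hZne).2 hd0.symm
      have hprop : y ∈ Z ∧ ‖y - y‖ = infDist y Z ∧
          ∀ z ∈ Z, ⟪y - y, y - z⟫ + ‖y - y‖ / (2 * r) * ‖y - z‖ ^ 2 ≥ 0 := by
        refine ⟨hy, by simp [← hd0], fun z hz => by simp⟩
      exact ⟨y, hprop, fun x' hx' => prox_uniq_aux Z r hr y hyd y x' hprop hx'⟩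
    · -- d > 0 : use prox-regularity
      obtain ⟨x, hxZ, hwdist, hnorm⟩ := hpr y ⟨hd0, hyd⟩
      set d := infDist y Z with hd
      have hdne : d ≠ 0 := hd0.ne'
      have hnyx : ‖y - x‖ = d := by
        have h1 : (r / d) * ‖y - x‖ = (r / d) * d := by
          rw [hnorm]; field_simp
        exact mul_left_cancel₀ (by positivity) h1
      have hnv : ‖(r / d) • (y - x)‖ = r := by
        rw [norm_smul, Real.norm_eq_abs, abs_of_pos (by positivity), hnyx]
        field_simp
      have hineq : ∀ z ∈ Z, ⟪y - x, x - z⟫ + ‖y - x‖ / (2 * r) * ‖x - z‖ ^ 2 ≥ 0 := by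
        intro z hz
        have hle : r ≤ dist (x + (r / d) • (y - x)) z := by
          calc r = infDist (x + (r / d) • (y - x)) Z := hwdist.symm
            _ ≤ dist (x + (r / d) • (y - x)) z := infDist_le_dist_of_mem hz
        rw [dist_eq_norm] at hle
        have hexp : x + (r / d) • (y - x) - z = (r / d) • (y - x) + (x - z) := by abel
        rw [hexp] at hle
        have hsq : r ^ 2 ≤ ‖(r / d) • (y - x) + (x - z)‖ ^ 2 :=
          pow_le_pow_left₀ hr.le hle 2
        rw [norm_add_sq_real, hnv, real_inner_smul_left] at hsq
        rw [hnyx]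
        have heq : ⟪y - x, x - z⟫ + d / (2 * r) * ‖x - z‖ ^ 2 =
            (d / (2 * r)) * (2 * (r / d * ⟪y - x, x - z⟫) + ‖x - z‖ ^ 2) := by
          field_simp
        rw [ge_iff_le, heq]
        exact mul_nonneg (by positivity) (by linarith)
      exact ⟨x, ⟨hxZ, hnyx, hineq⟩,
        fun x' hx' => prox_uniq_aux Z r hr y hyd x x' ⟨hxZ, hnyx, hineq⟩ hx'⟩
  · intro h y hy
    obtain ⟨hd0, hdr⟩ := hy
    obtain ⟨x, ⟨hxZ, hnx, hineq⟩, -⟩ := h y hdr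
    set d := infDist y Z with hd
    have hdne : d ≠ 0 := hd0.ne'
    have hnv : ‖(r / d) • (y - x)‖ = r := by
      rw [norm_smul, Real.norm_eq_abs, abs_of_pos (by positivity), hnx]
      field_simp
    refine ⟨x, hxZ, ?_, ?_⟩
    · apply le_antisymm
      · calc infDist (x + (r / d) • (y - x)) Z ≤ dist (x + (r / d) • (y - x)) x :=
              infDist_le_dist_of_mem hxZ
          _ = ‖(r / d) • (y - x)‖ := by rw [dist_eq_norm]; congr 1; abel
          _ = r := hnv
      · by_contra hlt
        push_neg at hlt
        obtain ⟨z, hz, hzlt⟩ := (infDist_lt_iff hZne).1 hlt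
        have hI := hineq z hz
        rw [hnx] at hI
        have hsq : r ^ 2 ≤ ‖x + (r / d) • (y - x) - z‖ ^ 2 := by
          have hexp : x + (r / d) • (y - x) - z = (r / d) • (y - x) + (x - z) := by abel
          rw [hexp, norm_add_sq_real, hnv, real_inner_smul_left]
          have h3 : 0 ≤ (r / d) * (⟪y - x, x - z⟫ + d / (2 * r) * ‖x - z‖ ^ 2) :=
            mul_nonneg (by positivity) hI
          have h4 : (r / d) * (⟪y - x, x - z⟫ + d / (2 * r) * ‖x - z‖ ^ 2) =
              (r / d) * ⟪y - x, x - z⟫ + (1 / 2) * ‖x - z‖ ^ 2 := by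
            field_simp
          linarith
        rw [dist_eq_norm] at hzlt
        nlinarith [norm_nonneg (x + (r / d) • (y - x) - z), hsq, hzlt]
    · rw [hnx]; field_simp
end

section
/- Let Hypothesis (A) hold. Then the boundary of Z is exactly ∂Z = {x ∈ X : G(x) = 1}; in particular, a point x ∈ X belongs to the interior of Z if and only if G(x) < 1. -/
open MeasureTheory Set Filter Metric
open scoped RealInnerProductSpace Topology

/-- `g` is the (Gâteaux-type) gradient of `G` at `x`: all directional derivatives exist and
are represented by the inner product with `g`. -/
def HasDirGradientAt {X : Type*} [NormedAddCommGroup X] [InnerProductSpace ℝ X]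
    (G : X → ℝ) (g : X) (x : X) : Prop :=
  ∀ y : X, Tendsto (fun t : ℝ => (G (x + t • y) - G x) / t) (𝓝[≠] (0:ℝ)) (𝓝 ⟪g, y⟫)

/-- Under Hypothesis (A) (with `G` continuous), the boundary of `Z` is exactly
`{x : G x = 1}`, and `x ∈ interior Z ↔ G x < 1`. -/
theorem frontier_sublevel_eq
    {X : Type*} [NormedAddCommGroup X] [InnerProductSpace ℝ X] [CompleteSpace X]
    (G : X → ℝ) (hGnonneg : ∀ x, 0 ≤ G x)
    (G' : X → X) (hgrad : ∀ x, HasDirGradientAt G (G' x) x)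
    (Z : Set X) (hZ : Z = {z : X | G z ≤ 1})
    (lam c : ℝ) (hlam : 0 < lam) (hc : 0 < c)
    (μ : ℝ → ℝ) (hμcont : ContinuousOn μ (Ici 0)) (hμmono : StrictMonoOn μ (Ici 0))
    (hμnonneg : ∀ s ∈ Ici (0:ℝ), 0 ≤ μ s) (hμ0 : μ 0 = 0) (hμtop : Tendsto μ atTop atTop)
    (hyp1 : ∀ x : X, G x = 1 → c ≤ ‖G' x‖)
    (hyp2 : ∀ x ∈ Z, ∀ y ∈ Z, ‖G' x - G' y‖ ≤ μ ‖x - y‖)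
    (hyp3 : ∀ x ∈ frontier Z, ∀ z ∈ Z, ⟪G' x - G' z, x - z⟫ ≥ -lam * ‖x - z‖ ^ 2)
    (hGcont : Continuous G)
    : frontier Z = {x : X | G x = 1} ∧ ∀ x : X, x ∈ interior Z ↔ G x < 1 := by
  subst hZ
  have hZclosed : IsClosed {z : X | G z ≤ 1} :=
    isClosed_le hGcont continuous_const
  have hopen : IsOpen {x : X | G x < 1} := isOpen_lt hGcont continuous_const
  have hsub : {x : X | G x < 1} ⊆ interior {z : X | G z ≤ 1} :=
    interior_maximal (fun x (hx : G x < 1) => le_of_lt hx) hopen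
  -- boundary points with G = 1 are not interior
  have hnotint : ∀ x : X, G x = 1 → x ∉ interior {z : X | G z ≤ 1} := by
    intro x hx hxint
    obtain ⟨ε, hε, hball⟩ := Metric.isOpen_iff.1 isOpen_interior x hxint
    set g := G' x with hg
    have hgpos : 0 < ‖g‖ := lt_of_lt_of_le hc (hyp1 x hx)
    have hipos : 0 < ⟪g, g⟫ := by
      rw [real_inner_self_eq_norm_sq]; positivity
    have h1 : ∀ᶠ t : ℝ in 𝓝[≠] (0:ℝ), 0 < (G (x + t • g) - G x) / t :=
      (hgrad x g).eventually (eventually_gt_nhds hipos)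
    have h2 : ∀ᶠ t : ℝ in 𝓝[≠] (0:ℝ), |t| < ε / ‖g‖ := by
      apply eventually_nhdsWithin_of_eventually_nhds
      have : Tendsto (fun t : ℝ => |t|) (𝓝 0) (𝓝 0) := by
        simpa using continuous_abs.tendsto (0:ℝ)
      exact this.eventually (Filter.Tendsto.eventually_lt_const (by positivity) tendsto_id)
    have h3 : ∀ᶠ t : ℝ in 𝓝[>] (0:ℝ),
        0 < (G (x + t • g) - G x) / t ∧ |t| < ε / ‖g‖ :=
      ((h1.and h2).filter_mono (nhdsWithin_mono _ (fun t ht => ne_of_gt ht)))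
    obtain ⟨t, ⟨hquot, htabs⟩, htpos⟩ := (h3.and self_mem_nhdsWithin).exists
    have hGgt : 1 < G (x + t • g) := by
      have := mul_pos hquot (show (0:ℝ) < t from htpos)
      rw [div_mul_cancel₀ _ (ne_of_gt htpos)] at this
      linarith [hx ▸ this]
    have hmem : x + t • g ∈ Metric.ball x ε := by
      rw [Metric.mem_ball, dist_eq_norm]
      have : ‖x + t • g - x‖ = |t| * ‖g‖ := by
        simp [norm_smul]
      rw [this]
      calc |t| * ‖g‖ < (ε / ‖g‖) * ‖g‖ := by
            exact mul_lt_mul_of_pos_right htabs hgpos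
        _ = ε := div_mul_cancel₀ _ (ne_of_gt hgpos)
    have : x + t • g ∈ {z : X | G z ≤ 1} := interior_subset (hball hmem)
    exact absurd this (not_le.2 hGgt)
  have hint : ∀ x : X, x ∈ interior {z : X | G z ≤ 1} ↔ G x < 1 := by
    intro x
    constructor
    · intro hxint
      have hxZ : x ∈ {z : X | G z ≤ 1} := interior_subset hxint
      simp only [Set.mem_setOf_eq] at hxZ
      rcases lt_or_eq_of_le hxZ with h | h
      · exact h
      · exact absurd hxint (hnotint x h)
    · intro h; exact hsub h
  refine ⟨?_, hint⟩
  ext x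
  rw [hZclosed.frontier_eq, Set.mem_diff]
  constructor
  · rintro ⟨hle, hni⟩
    have := (hint x).not.1 hni
    exact le_antisymm hle (not_lt.1 this)
  · intro h
    exact ⟨le_of_eq h, hnotint x h⟩
end

section
/- Let Hypothesis (B) hold. Then for every K > 0 there exists a constant C_K > 0 such that for all w₁, w₂ ∈ W with max{|w₁|_W, |w₂|_W} ≤ K one has d_H(Z(w₁), Z(w₂)) ≤ C_K |w₁ − w₂|_W, where d_H denotes the Hausdorff distance d_H(Z(w₁), Z(w₂)) := max{ sup_{z ∈ Z(w₁)} dist(z, Z(w₂)), sup_{z' ∈ Z(w₂)} dist(z', Z(w₁)) }. -/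
open MeasureTheory Set Filter Metric
open scoped RealInnerProductSpace Topology

set_option maxHeartbeats 1000000 in
/-- Under Hypothesis (B), for every `K > 0` the map `w ↦ Z(w)` is Lipschitz in the
Hausdorff distance on the ball of radius `K`. -/
theorem hausdorff_lipschitz
    {X W : Type*} [NormedAddCommGroup X] [InnerProductSpace ℝ X] [CompleteSpace X]
    [NormedAddCommGroup W] [NormedSpace ℝ W] [CompleteSpace W]
    (G : X → W → ℝ) (hGnonneg : ∀ (x : X) (w : W), 0 ≤ G x w)
    (hGlip : LocallyLipschitz (fun p : X × W => G p.1 p.2))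
    (Zs : W → Set X) (hZ : ∀ w, Zs w = {z : X | G z w ≤ 1})
    (Gx : X → W → X)
    (hgradx : ∀ w : W, ∀ z ∈ Zs w, ∀ y : X,
      Tendsto (fun t : ℝ => (G (z + t • y) w - G z w) / t) (𝓝[≠] (0:ℝ)) (𝓝 ⟪Gx z w, y⟫))
    (lam c L : ℝ) (hlam : 0 < lam) (hc : 0 < c) (hL : 0 < L)
    (μ₁ : W → ℝ → ℝ) (μ₂ : ℝ → ℝ)
    (hμ₁zero : ∀ w, μ₁ w 0 = 0) (hμ₂zero : μ₂ 0 = 0)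
    (hμ₁top : ∀ w, Tendsto (μ₁ w) atTop atTop) (hμ₂top : Tendsto μ₂ atTop atTop)
    (hyp1 : ∀ (x : X) (w : W), G x w = 1 → c ≤ ‖Gx x w‖)
    (hyp2 : ∀ w : W, ∀ x ∈ Zs w, ∀ y ∈ Zs w, ‖Gx x w - Gx y w‖ ≤ μ₁ w ‖x - y‖)
    (hyp3 : ∀ w : W, ∀ x ∈ frontier (Zs w), ∀ z ∈ Zs w,
      ⟪Gx x w - Gx z w, x - z⟫ ≥ -lam * ‖x - z‖ ^ 2)
    (hyp4 : ∀ (x : X) (w w' : W), |G x w - G x w'| ≤ L * ‖w - w'‖)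
    (hyp5 : ∀ ρ > (0:ℝ), ∀ (w : W) (x : X), ρ ≤ infDist x (Zs w) → μ₂ ρ ≤ G x w - 1)
    : ∀ K > (0:ℝ), ∃ CK > (0:ℝ), ∀ w₁ w₂ : W, max ‖w₁‖ ‖w₂‖ ≤ K →
        hausdorffDist (Zs w₁) (Zs w₂) ≤ CK * ‖w₁ - w₂‖ := by
  -- continuity of `G` in the first variable
  have hGcont : ∀ w : W, Continuous (fun y : X => G y w) := by
    intro w
    exact hGlip.continuous.comp (Continuous.prodMk continuous_id continuous_const)
  have hC' : (0:ℝ) < 2 * L / c := by positivity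
  -- the key one-sided estimate
  have key : ∀ w₁ w₂ : W, w₁ ≠ w₂ → ∀ z ∈ Zs w₁,
      ∃ p ∈ Zs w₂, dist z p ≤ (2 * L / c) * ‖w₁ - w₂‖ := by
    intro w₁ w₂ hne z hzmem
    have hδ : (0:ℝ) < ‖w₁ - w₂‖ := by
      rw [norm_pos_iff, sub_ne_zero]; exact hne
    set δ : ℝ := ‖w₁ - w₂‖ with hδdef
    set C' : ℝ := 2 * L / c with hC'def
    set ws : ℝ → W := fun s => w₁ + s • (w₂ - w₁) with hws
    have hwdist : ∀ s t : ℝ, ‖ws s - ws t‖ = |s - t| * δ := by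
      intro s t
      have h1 : ws s - ws t = (s - t) • (w₂ - w₁) := by
        simp only [hws]; rw [sub_smul]; abel
      rw [h1, norm_smul, Real.norm_eq_abs, norm_sub_rev w₂ w₁]
    have hw0 : ws 0 = w₁ := by simp [hws]
    have hw1 : ws 1 = w₂ := by simp [hws]
    have hG4 : ∀ (x : X) (s t : ℝ), G x (ws t) ≤ G x (ws s) + L * (|t - s| * δ) := by
      intro x s t
      have h := hyp4 x (ws t) (ws s)
      rw [abs_le] at h
      have := h.2
      rw [hwdist t s] at this
      linarith
    have hzle : G z w₁ ≤ 1 := by rw [hZ w₁] at hzmem; exact hzmem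
    -- the continuation structure
    set P : Set (ℝ × X) := {q : ℝ × X |
      q.1 ∈ Icc (0:ℝ) 1 ∧ G q.2 (ws q.1) ≤ 1 ∧ ‖q.2 - z‖ ≤ C' * δ * q.1} with hP
    set r : {q : ℝ × X // q ∈ P} → {q : ℝ × X // q ∈ P} → Prop :=
      fun a b => a.1.1 ≤ b.1.1 ∧ ‖b.1.2 - a.1.2‖ ≤ C' * δ * (b.1.1 - a.1.1) with hr
    have hz₀ : ((0:ℝ), z) ∈ P := by
      refine ⟨⟨le_refl 0, zero_le_one⟩, ?_, by simp⟩
      rw [hw0]; exact hzle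
    have hpair : ∀ a b : {q : ℝ × X // q ∈ P}, r a b ∨ r b a →
        ‖a.1.2 - b.1.2‖ ≤ C' * δ * |a.1.1 - b.1.1| := by
      rintro a b (h | h)
      · rw [norm_sub_rev, abs_sub_comm]
        exact h.2.trans (by
          have : b.1.1 - a.1.1 ≤ |b.1.1 - a.1.1| := le_abs_self _
          nlinarith [abs_nonneg (b.1.1 - a.1.1), hC'.le, hδ.le, mul_pos hC' hδ])
      · exact h.2.trans (by
          have : a.1.1 - b.1.1 ≤ |a.1.1 - b.1.1| := le_abs_self _
          nlinarith [abs_nonneg (a.1.1 - b.1.1), hC'.le, hδ.le, mul_pos hC' hδ])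
    -- chains are bounded
    have chainub : ∀ cs : Set {q : ℝ × X // q ∈ P}, IsChain r cs →
        ∃ ub, ∀ a ∈ cs, r a ub := by
      intro cs hcs
      rcases cs.eq_empty_or_nonempty with hcse | ⟨a0, ha0⟩
      · exact ⟨⟨(0, z), hz₀⟩, by simp [hcse]⟩
      set S : Set ℝ := (fun a : {q : ℝ × X // q ∈ P} => a.1.1) '' cs with hS
      have hSne : S.Nonempty := ⟨a0.1.1, a0, ha0, rfl⟩
      have hSbdd : BddAbove S := by
        refine ⟨1, ?_⟩; rintro _ ⟨a, _, rfl⟩; exact a.2.1.2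
      set sbar : ℝ := sSup S with hsbar
      have hub' : ∀ a ∈ cs, a.1.1 ≤ sbar := fun a ha => le_csSup hSbdd ⟨a, ha, rfl⟩
      have hex : ∀ k : ℕ, ∃ a, a ∈ cs ∧ sbar - 1 / (k + 1) < a.1.1 := by
        intro k
        have h1 : sbar - 1 / (k + 1) < sbar := by
          have : (0:ℝ) < 1 / (k + 1) := by positivity
          linarith
        obtain ⟨y, hy, hlt⟩ := exists_lt_of_lt_csSup hSne h1
        obtain ⟨a, ha, rfl⟩ := hy
        exact ⟨a, ha, hlt⟩
      choose seq hseqmem hseqlt using hex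
      have hseqle : ∀ k : ℕ, (seq k).1.1 ≤ sbar := fun k => hub' _ (hseqmem k)
      have hcomp : ∀ j k : ℕ, ‖(seq j).1.2 - (seq k).1.2‖ ≤
          C' * δ * |(seq j).1.1 - (seq k).1.1| := by
        intro j k
        by_cases hjk : seq j = seq k
        · rw [hjk]; simp
        · exact hpair _ _ (hcs (hseqmem j) (hseqmem k) (by simpa using hjk))
      have hsdiff : ∀ (N j : ℕ), N ≤ j → |(seq j).1.1 - sbar| ≤ 1 / (N + 1) := by
        intro N j hNj
        have h0 : (0:ℝ) < 1 / (N + 1) := by positivity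
        have h1 : (1:ℝ) / (j + 1) ≤ 1 / (N + 1) := by
          apply one_div_le_one_div_of_le (by positivity)
          have : (N:ℝ) ≤ j := by exact_mod_cast hNj
          linarith
        have h2 := hseqlt j
        have h3 := hseqle j
        rw [abs_le]
        constructor <;> linarith
      -- Cauchy
      have hcauchy : CauchySeq (fun k => (seq k).1.2) := by
        refine cauchySeq_of_le_tendsto_0 (fun N : ℕ => C' * δ * (2 / ((N:ℝ) + 1))) ?_ ?_
        · intro n m N hn hm
          rw [dist_eq_norm]
          refine (hcomp n m).trans ?_
          have h1 : |(seq n).1.1 - (seq m).1.1| ≤ 2 / ((N:ℝ) + 1) := by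
            have h2 := hsdiff N n hn
            have h3 := hsdiff N m hm
            calc |(seq n).1.1 - (seq m).1.1|
                = |((seq n).1.1 - sbar) - ((seq m).1.1 - sbar)| := by ring_nf
              _ ≤ |(seq n).1.1 - sbar| + |(seq m).1.1 - sbar| := abs_sub _ _
              _ ≤ 1 / ((N:ℝ)+1) + 1 / ((N:ℝ)+1) := add_le_add h2 h3
              _ = 2 / ((N:ℝ)+1) := by ring
          exact mul_le_mul_of_nonneg_left h1 (mul_pos hC' hδ).le
        · have h1 : Tendsto (fun N : ℕ => (2:ℝ) / ((N:ℝ) + 1)) atTop (𝓝 0) := by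
            have h2 : Tendsto (fun N : ℕ => (1:ℝ) / ((N:ℝ) + 1)) atTop (𝓝 0) :=
              tendsto_one_div_add_atTop_nhds_zero_nat
            have := h2.const_mul (2:ℝ)
            simpa [div_eq_mul_inv, mul_comm, mul_assoc, mul_left_comm] using this
          have := h1.const_mul (C' * δ)
          simpa using this
      obtain ⟨pbar, hpbar⟩ := cauchySeq_tendsto_of_complete hcauchy
      have hstend : Tendsto (fun k : ℕ => (seq k).1.1) atTop (𝓝 sbar) := by
        have hlow : Tendsto (fun k : ℕ => sbar - 1 / (k + 1)) atTop (𝓝 sbar) := by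
          have h1 : Tendsto (fun k : ℕ => (1:ℝ) / (k + 1)) atTop (𝓝 0) :=
            tendsto_one_div_add_atTop_nhds_zero_nat
          simpa using tendsto_const_nhds.sub h1
        exact tendsto_of_tendsto_of_tendsto_of_le_of_le hlow tendsto_const_nhds
          (fun k => (hseqlt k).le) hseqle
      have hsbar01 : sbar ∈ Icc (0:ℝ) 1 := by
        constructor
        · exact le_trans a0.2.1.1 (hub' a0 ha0)
        · exact csSup_le hSne (by rintro _ ⟨a, _, rfl⟩; exact a.2.1.2)
      have hubmem : (sbar, pbar) ∈ P := by
        refine ⟨hsbar01, ?_, ?_⟩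
        · -- G pbar (ws sbar) ≤ 1
          have hkle : ∀ k : ℕ, G (seq k).1.2 (ws sbar) ≤ 1 + L * (1 / (k+1) * δ) := by
            intro k
            refine (hG4 (seq k).1.2 (seq k).1.1 sbar).trans ?_
            have h1 := (seq k).2.2.1
            have h2 : |sbar - (seq k).1.1| ≤ 1 / ((k:ℝ)+1) := by
              rw [abs_sub_comm]; exact hsdiff k k le_rfl
            have h3 : L * (|sbar - (seq k).1.1| * δ) ≤ L * (1 / ((k:ℝ)+1) * δ) :=
              mul_le_mul_of_nonneg_left (mul_le_mul_of_nonneg_right h2 hδ.le) hL.le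
            linarith
          have hlhs : Tendsto (fun k => G (seq k).1.2 (ws sbar)) atTop
              (𝓝 (G pbar (ws sbar))) := ((hGcont (ws sbar)).tendsto pbar).comp hpbar
          have hrhs : Tendsto (fun k : ℕ => 1 + L * (1 / (k+1) * δ)) atTop (𝓝 1) := by
            have h1 : Tendsto (fun k : ℕ => (1:ℝ) / (k + 1)) atTop (𝓝 0) :=
              tendsto_one_div_add_atTop_nhds_zero_nat
            have := ((h1.mul_const δ).const_mul L).const_add 1
            simpa using this
          exact le_of_tendsto_of_tendsto' hlhs hrhs hkle
        · -- ‖pbar - z‖ ≤ C' δ sbar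
          have hlhs : Tendsto (fun k => ‖(seq k).1.2 - z‖) atTop (𝓝 ‖pbar - z‖) :=
            ((continuous_norm.comp (continuous_id.sub continuous_const)).tendsto pbar).comp hpbar
          have hrhs : Tendsto (fun k => C' * δ * (seq k).1.1) atTop (𝓝 (C' * δ * sbar)) :=
            hstend.const_mul _
          exact le_of_tendsto_of_tendsto' hlhs hrhs (fun k => (seq k).2.2.2)
      refine ⟨⟨(sbar, pbar), hubmem⟩, ?_⟩
      intro a ha
      refine ⟨hub' a ha, ?_⟩
      have hlhs : Tendsto (fun k => ‖(seq k).1.2 - a.1.2‖) atTop (𝓝 ‖pbar - a.1.2‖) :=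
        ((continuous_norm.comp (continuous_id.sub continuous_const)).tendsto pbar).comp hpbar
      have hrhs : Tendsto (fun k => C' * δ * |(seq k).1.1 - a.1.1|) atTop
          (𝓝 (C' * δ * |sbar - a.1.1|)) := by
        exact ((hstend.sub_const _).abs).const_mul _
      have hle : ∀ k, ‖(seq k).1.2 - a.1.2‖ ≤ C' * δ * |(seq k).1.1 - a.1.1| := by
        intro k
        by_cases hak : seq k = a
        · rw [hak]; simp
        · exact hpair _ _ (hcs (hseqmem k) ha (by simpa using hak))
      have := le_of_tendsto_of_tendsto' hlhs hrhs hle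
      rwa [abs_of_nonneg (by linarith [hub' a ha])] at this
    -- transitivity
    have htrans : ∀ {a b d : {q : ℝ × X // q ∈ P}}, r a b → r b d → r a d := by
      rintro a b d ⟨h1, h2⟩ ⟨h3, h4⟩
      refine ⟨h1.trans h3, ?_⟩
      calc ‖d.1.2 - a.1.2‖ ≤ ‖d.1.2 - b.1.2‖ + ‖b.1.2 - a.1.2‖ := norm_sub_le_norm_sub_add_norm_sub _ _ _
        _ ≤ C' * δ * (d.1.1 - b.1.1) + C' * δ * (b.1.1 - a.1.1) := add_le_add h4 h2
        _ = C' * δ * (d.1.1 - a.1.1) := by ring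
    obtain ⟨m, hm⟩ := exists_maximal_of_chains_bounded chainub htrans
    -- the maximal element has first coordinate 1
    have hms1 : m.1.1 = 1 := by
      by_contra hne1
      have hmlt : m.1.1 < 1 := lt_of_le_of_ne m.2.1.2 hne1
      have hGm : G m.1.2 (ws m.1.1) ≤ 1 := m.2.2.1
      -- construct a strictly bigger element
      have hstep : ∃ a : {q : ℝ × X // q ∈ P}, r m a ∧ m.1.1 < a.1.1 := by
        rcases lt_or_eq_of_le hGm with hlt | heq
        · -- interior case: move s alone
          set ε : ℝ := 1 - G m.1.2 (ws m.1.1) with hε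
          have hεpos : 0 < ε := by simp only [hε]; linarith
          set Δ : ℝ := min (1 - m.1.1) (ε / (L * δ)) with hΔ
          have hΔpos : 0 < Δ := lt_min (by linarith) (by positivity)
          have hΔle1 : Δ ≤ 1 - m.1.1 := min_le_left _ _
          have hmem : (m.1.1 + Δ, m.1.2) ∈ P := by
            refine ⟨⟨by show (0:ℝ) ≤ m.1.1 + Δ; linarith [m.2.1.1],
              by show m.1.1 + Δ ≤ (1:ℝ); linarith⟩, ?_, ?_⟩
            · show G m.1.2 (ws (m.1.1 + Δ)) ≤ 1
              refine (hG4 m.1.2 m.1.1 (m.1.1 + Δ)).trans ?_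
              have h1 : |m.1.1 + Δ - m.1.1| = Δ := by
                rw [show m.1.1 + Δ - m.1.1 = Δ from by ring]; exact abs_of_nonneg hΔpos.le
              rw [h1]
              have h2 : Δ ≤ ε / (L * δ) := min_le_right _ _
              have hLδ : (0:ℝ) < L * δ := mul_pos hL hδ
              have h3 : L * (Δ * δ) ≤ ε := by
                calc L * (Δ * δ) = (L * δ) * Δ := by ring
                  _ ≤ (L * δ) * (ε / (L * δ)) := mul_le_mul_of_nonneg_left h2 hLδ.le
                  _ = ε := by field_simp
              linarith
            · show ‖m.1.2 - z‖ ≤ C' * δ * (m.1.1 + Δ)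
              have h5 := m.2.2.2
              have hCp := mul_pos hC' hδ
              nlinarith
          refine ⟨⟨(m.1.1 + Δ, m.1.2), hmem⟩,
            ⟨le_add_of_nonneg_right hΔpos.le, ?_⟩, lt_add_of_pos_right _ hΔpos⟩
          show ‖m.1.2 - m.1.2‖ ≤ C' * δ * (m.1.1 + Δ - m.1.1)
          rw [sub_self, norm_zero]
          have he : m.1.1 + Δ - m.1.1 = Δ := by ring
          rw [he]
          positivity
        · -- boundary case: step inward using the gradient
          set n : X := Gx m.1.2 (ws m.1.1) with hn
          have hG1 : G m.1.2 (ws m.1.1) = 1 := heq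
          have hnorm : c ≤ ‖n‖ := hyp1 _ _ hG1
          have hnne : n ≠ 0 := by
            intro h; rw [h, norm_zero] at hnorm; linarith
          have hmemZ : m.1.2 ∈ Zs (ws m.1.1) := by rw [hZ]; exact le_of_eq hG1
          set u : X := -(‖n‖⁻¹ • n) with hu
          have hn0 : ‖n‖ ≠ 0 := norm_ne_zero_iff.mpr hnne
          have hnormu : ‖u‖ = 1 := by
            rw [hu, norm_neg, norm_smul, norm_inv, norm_norm, inv_mul_cancel₀ hn0]
          have hinner : ⟪n, u⟫ = -‖n‖ := by
            rw [hu, inner_neg_right, real_inner_smul_right, real_inner_self_eq_norm_sq,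
              pow_two, inv_mul_cancel_left₀ hn0]
          have htend := hgradx (ws m.1.1) m.1.2 hmemZ u
          rw [hinner] at htend
          have hev : ∀ᶠ t in 𝓝[≠] (0:ℝ),
              (G (m.1.2 + t • u) (ws m.1.1) - G m.1.2 (ws m.1.1)) / t < -c/2 := by
            apply htend.eventually_lt_const
            linarith
          rw [eventually_nhdsWithin_iff] at hev
          rw [Metric.eventually_nhds_iff] at hev
          obtain ⟨ε, hεpos, hεball⟩ := hev
          have h1m : (0:ℝ) < 1 - m.1.1 := by linarith
          set t : ℝ := min (ε / 2) (2 * L * δ * (1 - m.1.1) / c) with ht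
          have htpos : 0 < t := by
            refine lt_min (by positivity) (div_pos ?_ hc)
            exact mul_pos (mul_pos (mul_pos (by norm_num) hL) hδ) h1m
          have htne : t ≠ 0 := ne_of_gt htpos
          have htle : t ≤ ε / 2 := min_le_left _ _
          have htballs : dist t 0 < ε := by
            rw [Real.dist_eq, sub_zero, abs_of_pos htpos]
            linarith
          have hkey := hεball htballs (Set.mem_compl_singleton_iff.mpr htne)
          rw [hG1] at hkey
          have hGdec : G (m.1.2 + t • u) (ws m.1.1) < 1 - c / 2 * t := by
            rw [div_lt_iff₀ htpos] at hkey
            linarith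
          set Δ : ℝ := c * t / (2 * L * δ) with hΔ
          have hΔpos : 0 < Δ := by positivity
          have hΔle : Δ ≤ 1 - m.1.1 := by
            rw [hΔ, div_le_iff₀ (by positivity)]
            have h1 : t ≤ 2 * L * δ * (1 - m.1.1) / c := min_le_right _ _
            rw [le_div_iff₀ hc] at h1
            nlinarith
          have hLΔδ : L * (Δ * δ) = c / 2 * t := by
            rw [hΔ]; field_simp
          have htC : C' * δ * Δ = t := by
            rw [hΔ, hC'def]; field_simp
          have hmem : (m.1.1 + Δ, m.1.2 + t • u) ∈ P := by
            refine ⟨⟨by show (0:ℝ) ≤ m.1.1 + Δ; linarith [m.2.1.1],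
              by show m.1.1 + Δ ≤ (1:ℝ); linarith⟩, ?_, ?_⟩
            · show G (m.1.2 + t • u) (ws (m.1.1 + Δ)) ≤ 1
              refine (hG4 (m.1.2 + t • u) m.1.1 (m.1.1 + Δ)).trans ?_
              have h1 : |m.1.1 + Δ - m.1.1| = Δ := by
                rw [show m.1.1 + Δ - m.1.1 = Δ from by ring]; exact abs_of_nonneg hΔpos.le
              rw [h1]
              have : L * (Δ * δ) = c / 2 * t := hLΔδ
              nlinarith [hGdec]
            · show ‖m.1.2 + t • u - z‖ ≤ C' * δ * (m.1.1 + Δ)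
              have h1 : ‖m.1.2 + t • u - z‖ ≤ ‖m.1.2 - z‖ + ‖t • u‖ := by
                have : m.1.2 + t • u - z = (m.1.2 - z) + t • u := by abel
                rw [this]; exact norm_add_le _ _
              have h2 : ‖t • u‖ = t := by
                rw [norm_smul, hnormu, Real.norm_eq_abs, abs_of_pos htpos, mul_one]
              have h3 := m.2.2.2
              rw [h2] at h1
              have : C' * δ * (m.1.1 + Δ) = C' * δ * m.1.1 + t := by rw [mul_add, htC]
              linarith
          refine ⟨⟨(m.1.1 + Δ, m.1.2 + t • u), hmem⟩,
            ⟨le_add_of_nonneg_right hΔpos.le, ?_⟩, lt_add_of_pos_right _ hΔpos⟩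
          show ‖m.1.2 + t • u - m.1.2‖ ≤ C' * δ * (m.1.1 + Δ - m.1.1)
          have he1 : m.1.2 + t • u - m.1.2 = t • u := by abel
          have he2 : m.1.1 + Δ - m.1.1 = Δ := by ring
          rw [he1, he2, norm_smul, hnormu, Real.norm_eq_abs, abs_of_pos htpos, mul_one, htC]
      obtain ⟨a, hra, hlt⟩ := hstep
      have := (hm a hra).1
      linarith
    -- conclude
    refine ⟨m.1.2, ?_, ?_⟩
    · rw [hZ]
      have := m.2.2.1
      rw [hms1, hw1] at this
      exact this
    · rw [dist_eq_norm, norm_sub_rev]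
      have := m.2.2.2
      rw [hms1, mul_one] at this
      exact this
  -- main conclusion
  intro K hK
  refine ⟨2 * L / c, hC', ?_⟩
  intro w₁ w₂ _
  by_cases hne : w₁ = w₂
  · subst hne
    simp [hausdorffDist_self_zero]
  · have hδ : (0:ℝ) ≤ ‖w₁ - w₂‖ := norm_nonneg _
    apply hausdorffDist_le_of_mem_dist (by positivity)
    · intro x hx
      obtain ⟨p, hp, hd⟩ := key w₁ w₂ hne x hx
      exact ⟨p, hp, hd⟩
    · intro x hx
      obtain ⟨p, hp, hd⟩ := key w₂ w₁ (Ne.symm hne) x hx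
      rw [norm_sub_rev] at hd
      exact ⟨p, hp, hd⟩
end

section
/- Let Hypothesis (B) hold, let the partial gradient ∇_wG : X × W → W' be continuous, let u ∈ W^{1,1}(0,T; X), w ∈ W^{1,1}(0,T; W), x₀ ∈ Z(w(0)), and let ξ ∈ W^{1,1}(0,T; X) be the solution of the sweeping process (GP) with x(t) = u(t) − ξ(t). Define s(t) = [∇ₓG(x(t), w(t)) / (dist(x(t), ∂Z(w(t))) + |∇ₓG(x(t), w(t))|²)] · ⟨w'(t), ∇_wG(x(t), w(t))⟩_{W,W'}. Then ⟨ξ'(t), x'(t) + s(t)⟩ = 0 for almost all t ∈ (0,T). -/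
open MeasureTheory Set Filter Metric
open scoped RealInnerProductSpace Topology

/-- `f ∈ W^{1,1}(0,T;Y)` with a.e. derivative `f'`: `f'` is Bochner integrable on `(0,T)`
and `f t = f 0 + ∫₀ᵗ f'` on `[0,T]`. -/
def IsW11 {Y : Type*} [NormedAddCommGroup Y] [NormedSpace ℝ Y] (T : ℝ) (f f' : ℝ → Y) : Prop :=
  IntegrableOn f' (Ioo 0 T) ∧ ∀ t ∈ Icc 0 T, f t = f 0 + ∫ s in (0:ℝ)..t, f' s

/-- Solution of the sweeping process (GP) with data `(u, w, x₀)`, where `ξ'` is the a.e.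
derivative of `ξ` and `x(t) = u(t) - ξ(t)`. -/
def IsGPSol {X W : Type*} [NormedAddCommGroup X] [InnerProductSpace ℝ X]
    (T r : ℝ) (Zs : W → Set X) (u : ℝ → X) (w : ℝ → W) (x₀ : X) (ξ ξ' : ℝ → X) : Prop :=
  (∀ t ∈ Icc 0 T, u t - ξ t ∈ Zs (w t)) ∧ u 0 - ξ 0 = x₀ ∧
    ∀ᵐ t ∂(volume.restrict (Ioo 0 T)), ∀ z ∈ Zs (w t),
      ⟪(u t - ξ t) - z, ξ' t⟫ + ‖ξ' t‖ / (2 * r) * ‖(u t - ξ t) - z‖ ^ 2 ≥ 0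

lemma ae_hasDerivAt_primitive {Y : Type*} [NormedAddCommGroup Y] [NormedSpace ℝ Y]
    [CompleteSpace Y] {g : ℝ → Y} (hg : Integrable g) :
    ∀ᵐ t : ℝ, HasDerivAt (fun s => ∫ r in (0:ℝ)..s, g r) (g t) t := by
  filter_upwards [IsUnifLocDoublingMeasure.ae_tendsto_average_norm_sub
    volume hg.locallyIntegrable 1] with t ht
  have havg : Tendsto (fun s : ℝ => ⨍ y in closedBall t |s - t|, ‖g y - g t‖) (𝓝[≠] t) (𝓝 0) := by
    apply ht (fun _ => t) (fun s => |s - t|)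
    · rw [tendsto_nhdsWithin_iff]
      constructor
      · have hc : Tendsto (fun s : ℝ => |s - t|) (𝓝 t) (𝓝 0) := by
          have h2 : Continuous (fun s : ℝ => |s - t|) := (continuous_id.sub continuous_const).abs
          simpa using h2.tendsto t
        exact hc.mono_left nhdsWithin_le_nhds
      · filter_upwards [self_mem_nhdsWithin] with s hs
        exact mem_Ioi.2 (abs_pos.2 (sub_ne_zero.2 hs))
    · filter_upwards with s
      rw [mem_closedBall, dist_self]
      positivity
  rw [hasDerivAt_iff_tendsto_slope, tendsto_iff_norm_sub_tendsto_zero]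
  apply squeeze_zero' (Eventually.of_forall fun s => norm_nonneg _)
    (g := fun s => 2 * ⨍ y in closedBall t |s - t|, ‖g y - g t‖)
  · filter_upwards [self_mem_nhdsWithin] with s hs
    have hst : s - t ≠ 0 := sub_ne_zero.2 hs
    have habs : (0:ℝ) < |s - t| := abs_pos.2 hst
    have hFd : (∫ r in (0:ℝ)..s, g r) - ∫ r in (0:ℝ)..t, g r = ∫ r in t..s, g r := by
      rw [intervalIntegral.integral_interval_sub_left hg.intervalIntegrable
        hg.intervalIntegrable]
    have hsl : slope (fun s => ∫ r in (0:ℝ)..s, g r) t s - g t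
        = (s - t)⁻¹ • (∫ r in t..s, (g r - g t)) := by
      rw [slope_def_module, hFd, intervalIntegral.integral_sub hg.intervalIntegrable
        intervalIntegrable_const, intervalIntegral.integral_const, smul_sub,
        smul_smul, inv_mul_cancel₀ hst, one_smul]
    rw [hsl, norm_smul, norm_inv, Real.norm_eq_abs]
    have hIoc : uIoc t s ⊆ closedBall t |s - t| := by
      intro r hr
      rw [Set.mem_uIoc] at hr
      rw [mem_closedBall, Real.dist_eq, abs_le]
      rcases hr with ⟨h1, h2⟩ | ⟨h1, h2⟩ <;> constructor <;>
        cases abs_cases (s - t) <;> linarith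
    have hint : IntegrableOn (fun r => ‖g r - g t‖) (closedBall t |s - t|) :=
      (hg.integrableOn.sub (integrableOn_const
        (measure_closedBall_lt_top.ne))).norm
    have hμ : (volume (closedBall t |s - t|)).toReal = 2 * |s - t| := by
      rw [Real.volume_closedBall, ENNReal.toReal_ofReal (by positivity)]
    have hle : ‖∫ r in t..s, (g r - g t)‖ ≤ ∫ y in closedBall t |s - t|, ‖g y - g t‖ :=
      (intervalIntegral.norm_integral_le_integral_norm_uIoc).trans
        (setIntegral_mono_set hint (Eventually.of_forall fun y => norm_nonneg _)
          (HasSubset.Subset.eventuallyLE hIoc))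
    calc |s - t|⁻¹ * ‖∫ r in t..s, (g r - g t)‖
        ≤ |s - t|⁻¹ * ∫ y in closedBall t |s - t|, ‖g y - g t‖ := by gcongr
      _ = 2 * ⨍ y in closedBall t |s - t|, ‖g y - g t‖ := by
          rw [setAverage_eq, smul_eq_mul, measureReal_def, hμ]
          field_simp
  · simpa using havg.const_mul 2

lemma IsW11.ae_hasDerivAt {Y : Type*} [NormedAddCommGroup Y] [NormedSpace ℝ Y]
    [CompleteSpace Y] {T : ℝ} {f f' : ℝ → Y} (hf : IsW11 T f f') :
    ∀ᵐ t ∂(volume.restrict (Ioo 0 T)), HasDerivAt f (f' t) t := by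
  set g := (Ioo 0 T).indicator f' with hgdef
  have hg : Integrable g := hf.1.integrable_indicator measurableSet_Ioo
  filter_upwards [ae_restrict_of_ae (ae_hasDerivAt_primitive hg),
    ae_restrict_mem measurableSet_Ioo] with t hF ht
  have hgt : g t = f' t := indicator_of_mem ht _
  have heq : ∀ s ∈ Ioo 0 T, f s = f 0 + ∫ r in (0:ℝ)..s, g r := by
    intro s hs
    rw [hf.2 s (Ioo_subset_Icc_self hs)]
    congr 1
    apply intervalIntegral.integral_congr_ae
    apply Eventually.of_forall
    intro r hr
    rw [uIoc_of_le hs.1.le] at hr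
    have hrT : r ∈ Ioo 0 T := ⟨hr.1, lt_of_le_of_lt hr.2 hs.2⟩
    rw [hgdef, indicator_of_mem hrT]
  rw [← hgt]
  apply HasDerivAt.congr_of_eventuallyEq (hF.const_add (f 0))
  filter_upwards [Ioo_mem_nhds ht.1 ht.2] with s hs using heq s hs

lemma hasDerivAt_comp_curve
    {X W : Type*} [NormedAddCommGroup X] [NormedSpace ℝ X]
    [NormedAddCommGroup W] [NormedSpace ℝ W]
    (G : X → W → ℝ) (hGlip : LocallyLipschitz (fun p : X × W => G p.1 p.2))
    (Gw : X → W → StrongDual ℝ W)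
    (hgradw : ∀ (x : X) (w : W) (v : W),
      Tendsto (fun t : ℝ => (G x (w + t • v) - G x w) / t) (𝓝[≠] (0:ℝ)) (𝓝 (Gw x w v)))
    (hGwcont : Continuous (fun p : X × W => Gw p.1 p.2))
    (x : ℝ → X) (w : ℝ → W) (t₀ : ℝ) (a : X) (b : W)
    (hx : HasDerivAt x a t₀) (hw : HasDerivAt w b t₀)
    (gxa : ℝ)
    (hgx : Tendsto (fun τ : ℝ => (G (x t₀ + τ • a) (w t₀) - G (x t₀) (w t₀)) / τ)
      (𝓝[≠] (0:ℝ)) (𝓝 gxa)) :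
    HasDerivAt (fun s => G (x s) (w s)) (gxa + Gw (x t₀) (w t₀) b) t₀ := by
  set x₀ := x t₀ with hx₀
  set w₀ := w t₀ with hw₀
  -- derivative of G p (q + s • v) in s, at 0
  have key : ∀ (p : X) (q : W) (v : W),
      HasDerivAt (fun s : ℝ => G p (q + s • v)) (Gw p q v) 0 := by
    intro p q v
    rw [hasDerivAt_iff_tendsto_slope]
    apply (hgradw p q v).congr'
    filter_upwards [self_mem_nhdsWithin] with h hh
    rw [slope_def_field]
    simp
  have keyAt : ∀ (p : X) (q : W) (v : W) (s₀ : ℝ),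
      HasDerivAt (fun s : ℝ => G p (q + s • v)) (Gw p (q + s₀ • v) v) s₀ := by
    intro p q v s₀
    have k := key p (q + s₀ • v) v
    have h1 := HasDerivAt.comp s₀ (by simpa using k) ((hasDerivAt_id s₀).sub_const s₀)
    have h2 : ((fun s : ℝ => G p (q + s₀ • v + s • v)) ∘ fun s => s - s₀)
        = fun s : ℝ => G p (q + s • v) := by
      funext s
      simp only [Function.comp_apply]
      congr 1
      rw [sub_smul]
      abel
    simp only [id_eq] at h1
    rw [h2, mul_one] at h1
    exact h1
  set D : ℝ := gxa + Gw x₀ w₀ b with hD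
  set φ : ℝ → ℝ := fun h => G (x₀ + h • a) (w₀ + h • b) with hφ
  have hφ0 : HasDerivAt φ D 0 := by
    rw [hasDerivAt_iff_tendsto_slope]
    have hθ : ∀ h : ℝ, h ≠ 0 → ∃ θ, θ ∈ Ioo (0:ℝ) 1 ∧
        G (x₀ + h • a) (w₀ + h • b) - G (x₀ + h • a) w₀
          = h * Gw (x₀ + h • a) (w₀ + (θ * h) • b) b := by
      intro h hh
      obtain ⟨θ, hθmem, hθeq⟩ := exists_hasDerivAt_eq_slope
        (fun s => G (x₀ + h • a) (w₀ + s • (h • b)))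
        (fun s => Gw (x₀ + h • a) (w₀ + s • (h • b)) (h • b)) one_pos
        (by
          apply Continuous.continuousOn
          exact hGlip.continuous.comp
            (continuous_const.prodMk (continuous_const.add
              (continuous_id.smul continuous_const))))
        (fun s _ => keyAt _ _ _ s)
      refine ⟨θ, hθmem, ?_⟩
      have hsm : θ • h • b = (θ * h) • b := smul_smul θ h b
      have h3 : (Gw (x₀ + h • a) (w₀ + θ • h • b)) (h • b)
          = h * (Gw (x₀ + h • a) (w₀ + (θ * h) • b)) b := by
        rw [ContinuousLinearMap.map_smul, smul_eq_mul, hsm]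
      rw [← h3, hθeq]
      simp
    choose! θf hθmem hθeq using hθ
    have hA : Tendsto (fun h : ℝ => (G (x₀ + h • a) (w₀ + h • b) - G (x₀ + h • a) w₀) / h)
        (𝓝[≠] (0:ℝ)) (𝓝 (Gw x₀ w₀ b)) := by
      have hsc : Tendsto (fun h : ℝ => θf h * h) (𝓝[≠] (0:ℝ)) (𝓝 0) := by
        have hbd : ∀ᶠ h in 𝓝[≠] (0:ℝ), ‖θf h * h‖ ≤ |h| := by
          filter_upwards [self_mem_nhdsWithin] with h hh
          have h1 := (hθmem h hh).1
          have h2 := (hθmem h hh).2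
          rw [Real.norm_eq_abs, abs_mul]
          nlinarith [abs_nonneg h, abs_of_pos h1]
        have habs : Tendsto (fun h : ℝ => |h|) (𝓝[≠] (0:ℝ)) (𝓝 0) := by
          have hca : Continuous (fun h : ℝ => |h|) := continuous_abs
          have := hca.tendsto 0
          simpa using this.mono_left nhdsWithin_le_nhds
        exact squeeze_zero_norm' hbd habs
      have hpt : Tendsto (fun h : ℝ => ((x₀ + h • a : X), (w₀ + (θf h * h) • b : W)))
          (𝓝[≠] (0:ℝ)) (𝓝 (x₀, w₀)) := by
        apply Tendsto.prodMk_nhds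
        · have hcx : Tendsto (fun h : ℝ => (x₀ + h • a : X)) (𝓝 0) (𝓝 x₀) := by
            have : Continuous (fun h : ℝ => (x₀ + h • a : X)) :=
              continuous_const.add (continuous_id.smul continuous_const)
            simpa using this.tendsto 0
          exact hcx.mono_left nhdsWithin_le_nhds
        · have : Tendsto (fun h : ℝ => (w₀ + (θf h * h) • b : W)) (𝓝[≠] (0:ℝ)) (𝓝 (w₀ + (0:ℝ) • b)) :=
            tendsto_const_nhds.add (hsc.smul_const b)
          simpa using this
      have hev : Continuous (fun f : StrongDual ℝ W => f b) :=
        (ContinuousLinearMap.apply ℝ ℝ b).continuous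
      have hGwpt : Tendsto (fun h : ℝ => Gw (x₀ + h • a) (w₀ + (θf h * h) • b) b)
          (𝓝[≠] (0:ℝ)) (𝓝 (Gw x₀ w₀ b)) :=
        ((hev.comp hGwcont).tendsto (x₀, w₀)).comp hpt
      apply hGwpt.congr'
      filter_upwards [self_mem_nhdsWithin] with h hh
      rw [hθeq h hh, mul_div_cancel_left₀ _ hh]
    have hsum := hgx.add hA
    apply hsum.congr'
    filter_upwards [self_mem_nhdsWithin] with h hh
    rw [slope_def_field]
    simp only [hφ, zero_smul, add_zero, sub_zero, hx₀, hw₀]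
    rw [← add_div]
    ring_nf
  -- transfer to the curve
  rw [hasDerivAt_iff_isLittleO]
  have h1 : (fun s => φ (s - t₀) - φ 0 - (s - t₀) • D) =o[𝓝 t₀] fun s => s - t₀ := by
    have h0 := hasDerivAt_iff_isLittleO.1 hφ0
    have hshift : Tendsto (fun s : ℝ => s - t₀) (𝓝 t₀) (𝓝 0) := by
      have : Continuous (fun s : ℝ => s - t₀) := continuous_id.sub continuous_const
      simpa using this.tendsto t₀
    have := h0.comp_tendsto hshift
    simpa [Function.comp_def] using this
  have e₁ := hasDerivAt_iff_isLittleO.1 hx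
  have e₂ := hasDerivAt_iff_isLittleO.1 hw
  have h2 : (fun s => G (x s) (w s) - φ (s - t₀)) =o[𝓝 t₀] fun s => s - t₀ := by
    obtain ⟨K, U, hU, hlip⟩ := hGlip (x₀, w₀)
    have hbig : (fun s => G (x s) (w s) - φ (s - t₀)) =O[𝓝 t₀]
        (fun s => ‖x s - x₀ - (s - t₀) • a‖ + ‖w s - w₀ - (s - t₀) • b‖) := by
      rw [Asymptotics.isBigO_iff]
      refine ⟨K, ?_⟩
      have hc1 : Tendsto (fun s => ((x s : X), (w s : W))) (𝓝 t₀) (𝓝 (x₀, w₀)) :=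
        hx.continuousAt.prodMk hw.continuousAt
      have hc2 : Tendsto (fun s => ((x₀ + (s - t₀) • a : X), (w₀ + (s - t₀) • b : W)))
          (𝓝 t₀) (𝓝 (x₀, w₀)) := by
        have hcc : Continuous (fun s : ℝ =>
            ((x₀ + (s - t₀) • a : X), (w₀ + (s - t₀) • b : W))) := by
          apply Continuous.prodMk <;>
            exact continuous_const.add ((continuous_id.sub continuous_const).smul
              continuous_const)
        have := hcc.tendsto t₀
        simpa using this
      filter_upwards [hc1 hU, hc2 hU] with s hs1 hs2
      have hd := hlip.dist_le_mul _ hs1 _ hs2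
      have hdist : dist ((x s : X), (w s : W))
            ((x₀ + (s - t₀) • a : X), (w₀ + (s - t₀) • b : W))
          ≤ ‖x s - x₀ - (s - t₀) • a‖ + ‖w s - w₀ - (s - t₀) • b‖ := by
        rw [Prod.dist_eq]
        apply max_le
        · rw [dist_eq_norm]
          have : x s - (x₀ + (s - t₀) • a) = x s - x₀ - (s - t₀) • a := by abel
          rw [this]
          linarith [norm_nonneg (w s - w₀ - (s - t₀) • b)]
        · rw [dist_eq_norm]
          have : w s - (w₀ + (s - t₀) • b) = w s - w₀ - (s - t₀) • b := by abel
          rw [this]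
          linarith [norm_nonneg (x s - x₀ - (s - t₀) • a)]
      have hnn : (0:ℝ) ≤ ‖x s - x₀ - (s - t₀) • a‖ + ‖w s - w₀ - (s - t₀) • b‖ := by
        positivity
      calc ‖G (x s) (w s) - φ (s - t₀)‖
          = dist (G (x s) (w s)) (φ (s - t₀)) := by rw [Real.dist_eq, Real.norm_eq_abs]
        _ ≤ K * dist ((x s : X), (w s : W))
              ((x₀ + (s - t₀) • a : X), (w₀ + (s - t₀) • b : W)) := hd
        _ ≤ K * (‖x s - x₀ - (s - t₀) • a‖ + ‖w s - w₀ - (s - t₀) • b‖) := by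
            apply mul_le_mul_of_nonneg_left hdist K.coe_nonneg
        _ = K * ‖‖x s - x₀ - (s - t₀) • a‖ + ‖w s - w₀ - (s - t₀) • b‖‖ := by
            rw [Real.norm_eq_abs, abs_of_nonneg hnn]
    exact hbig.trans_isLittleO (e₁.norm_left.add e₂.norm_left)
  have hsum2 := h2.add h1
  apply hsum2.congr' _ EventuallyEq.rfl
  apply Eventually.of_forall
  intro s
  have hφzero : φ 0 = G x₀ w₀ := by simp [hφ]
  simp only [hφzero, smul_eq_mul, hx₀, hw₀]
  ring

/-- Under Hypothesis (B) with `∇_w G` continuous, the solution of the sweeping process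
satisfies `⟪ξ′(t), x′(t) + s(t)⟫ = 0` a.e., with the correction term `s` given by
formula (2.10) of the paper. -/
theorem orthogonality_identity
    {X W : Type*} [NormedAddCommGroup X] [InnerProductSpace ℝ X] [CompleteSpace X]
    [NormedAddCommGroup W] [NormedSpace ℝ W] [CompleteSpace W]
    (G : X → W → ℝ) (hGnonneg : ∀ (x : X) (w : W), 0 ≤ G x w)
    (hGlip : LocallyLipschitz (fun p : X × W => G p.1 p.2))
    (Zs : W → Set X) (hZ : ∀ w, Zs w = {z : X | G z w ≤ 1})
    (Gx : X → W → X)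
    (hgradx : ∀ w : W, ∀ z ∈ Zs w, ∀ y : X,
      Tendsto (fun t : ℝ => (G (z + t • y) w - G z w) / t) (𝓝[≠] (0:ℝ)) (𝓝 ⟪Gx z w, y⟫))
    (lam c L : ℝ) (hlam : 0 < lam) (hc : 0 < c) (hL : 0 < L)
    (μ₁ : W → ℝ → ℝ) (μ₂ : ℝ → ℝ)
    (hμ₁zero : ∀ w, μ₁ w 0 = 0) (hμ₂zero : μ₂ 0 = 0)
    (hμ₁top : ∀ w, Tendsto (μ₁ w) atTop atTop) (hμ₂top : Tendsto μ₂ atTop atTop)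
    (hyp1 : ∀ (x : X) (w : W), G x w = 1 → c ≤ ‖Gx x w‖)
    (hyp2 : ∀ w : W, ∀ x ∈ Zs w, ∀ y ∈ Zs w, ‖Gx x w - Gx y w‖ ≤ μ₁ w ‖x - y‖)
    (hyp3 : ∀ w : W, ∀ x ∈ frontier (Zs w), ∀ z ∈ Zs w,
      ⟪Gx x w - Gx z w, x - z⟫ ≥ -lam * ‖x - z‖ ^ 2)
    (hyp4 : ∀ (x : X) (w w' : W), |G x w - G x w'| ≤ L * ‖w - w'‖)
    (hyp5 : ∀ ρ > (0:ℝ), ∀ (w : W) (x : X), ρ ≤ infDist x (Zs w) → μ₂ ρ ≤ G x w - 1)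
    (Gw : X → W → StrongDual ℝ W)
    (hgradw : ∀ (x : X) (w : W) (v : W),
      Tendsto (fun t : ℝ => (G x (w + t • v) - G x w) / t) (𝓝[≠] (0:ℝ)) (𝓝 (Gw x w v)))
    (hGwcont : Continuous (fun p : X × W => Gw p.1 p.2))
    (T : ℝ) (hT : 0 < T)
    (u u' : ℝ → X) (hu : IsW11 T u u')
    (w w' : ℝ → W) (hw : IsW11 T w w')
    (x₀ : X) (hx₀ : x₀ ∈ Zs (w 0))
    (ξ ξ' : ℝ → X) (hξ : IsW11 T ξ ξ')
    (hsol : IsGPSol T (c / lam) Zs u w x₀ ξ ξ') :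
    ∀ᵐ t ∂(volume.restrict (Ioo 0 T)),
      ⟪ξ' t, (u' t - ξ' t) +
        (Gw (u t - ξ t) (w t) (w' t) /
            (infDist (u t - ξ t) (frontier (Zs (w t))) + ‖Gx (u t - ξ t) (w t)‖ ^ 2)) •
          Gx (u t - ξ t) (w t)⟫ = 0 := by
  obtain ⟨hmem, hx0, hGP⟩ := hsol
  have hr : (0:ℝ) < c / lam := div_pos hc hlam
  have hGcont : Continuous fun p : X × W => G p.1 p.2 := hGlip.continuous
  filter_upwards [hGP, hu.ae_hasDerivAt, hw.ae_hasDerivAt, hξ.ae_hasDerivAt,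
    ae_restrict_mem measurableSet_Ioo] with t hGPt hDu hDw hDξ ht
  by_cases hξ0 : ξ' t = 0
  · rw [hξ0, inner_zero_left]
  set xt := u t - ξ t with hxt
  have hxtZ : xt ∈ Zs (w t) := hmem t (Ioo_subset_Icc_self ht)
  have hxtG : G xt (w t) ≤ 1 := by rw [hZ] at hxtZ; exact hxtZ
  have hnorm : 0 < ‖ξ' t‖ := norm_pos_iff.2 hξ0
  -- Step 1 : the point is on the boundary level set
  have hG1 : G xt (w t) = 1 := by
    by_contra hne
    have hlt : G xt (w t) < 1 := lt_of_le_of_ne hxtG hne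
    have hopen : IsOpen {p : X | G p (w t) < 1} :=
      isOpen_lt (hGcont.comp (continuous_id.prodMk continuous_const)) continuous_const
    obtain ⟨ε, hε, hball⟩ := Metric.isOpen_iff.1 hopen xt hlt
    set δ := min (ε / 2) (c / lam) with hδ
    have hδpos : 0 < δ := lt_min (by linarith) hr
    have hδle : δ ≤ c / lam := min_le_right _ _
    set z := xt + δ • ‖ξ' t‖⁻¹ • ξ' t with hzdef
    have hxz : xt - z = -(δ • ‖ξ' t‖⁻¹ • ξ' t) := by rw [hzdef]; abel
    have hnz : ‖xt - z‖ = δ := by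
      rw [hxz, norm_neg, norm_smul, norm_smul, norm_inv, norm_norm, Real.norm_eq_abs,
        abs_of_pos hδpos]
      field_simp
    have hzmem : z ∈ Zs (w t) := by
      rw [hZ]
      have hmemb : z ∈ ball xt ε := by
        rw [mem_ball, dist_eq_norm, show z - xt = -(xt - z) by abel, norm_neg, hnz]
        calc δ ≤ ε / 2 := min_le_left _ _
          _ < ε := by linarith
      show G z (w t) ≤ 1
      exact le_of_lt (show G z (w t) < 1 from hball hmemb)
    have hGPz := hGPt z hzmem
    have hinner : ⟪xt - z, ξ' t⟫ = -(δ * ‖ξ' t‖) := by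
      rw [hxz, inner_neg_left, real_inner_smul_left, real_inner_smul_left,
        real_inner_self_eq_norm_sq]
      field_simp
    rw [hinner, hnz] at hGPz
    have e1 : δ * ‖ξ' t‖ ≤ ‖ξ' t‖ / (2 * (c / lam)) * δ ^ 2 := by linarith
    rw [div_mul_eq_mul_div, le_div_iff₀ (by positivity)] at e1
    have hNd : 0 < ‖ξ' t‖ * δ := mul_pos hnorm hδpos
    nlinarith [e1, hNd, hδle, hr, mul_le_mul_of_nonneg_left hδle (le_of_lt hNd)]
  set gx := Gx xt (w t) with hgxdef
  have hgxc : c ≤ ‖gx‖ := hyp1 xt (w t) hG1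
  have hgxpos : 0 < ‖gx‖ := lt_of_lt_of_le hc hgxc
  have hgxne : gx ≠ 0 := norm_pos_iff.1 hgxpos
  have hgxsq : ⟪gx, gx⟫ = ‖gx‖ ^ 2 := real_inner_self_eq_norm_sq gx
  -- cone property
  have hcone : ∀ y : X, ⟪gx, y⟫ < 0 → ⟪y, ξ' t⟫ ≤ 0 := by
    intro y hy
    have hdir' : Tendsto (fun τ : ℝ => (G (xt + τ • y) (w t) - G xt (w t)) / τ)
        (𝓝[>] (0:ℝ)) (𝓝 ⟪gx, y⟫) :=
      (hgradx (w t) xt hxtZ y).mono_left (nhdsWithin_mono 0 fun τ hτ => ne_of_gt hτ)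
    have hneg : ∀ᶠ τ in 𝓝[>] (0:ℝ), (G (xt + τ • y) (w t) - G xt (w t)) / τ < 0 :=
      hdir'.eventually_lt_const hy
    have hle : ∀ᶠ τ in 𝓝[>] (0:ℝ),
        ⟪y, ξ' t⟫ ≤ ‖ξ' t‖ / (2 * (c / lam)) * τ * ‖y‖ ^ 2 := by
      filter_upwards [hneg, self_mem_nhdsWithin] with τ hτneg hτpos
      rw [mem_Ioi] at hτpos
      have hnum : G (xt + τ • y) (w t) - G xt (w t) < 0 := by
        rcases div_neg_iff.1 hτneg with ⟨_, h2⟩ | ⟨h1, _⟩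
        · linarith
        · exact h1
      have hzZ : xt + τ • y ∈ Zs (w t) := by
        rw [hZ]
        have : G (xt + τ • y) (w t) < 1 := by rw [hG1] at hnum; linarith
        exact le_of_lt this
      have hGPz := hGPt _ hzZ
      have hxz : xt - (xt + τ • y) = -(τ • y) := by abel
      rw [hxz, inner_neg_left, real_inner_smul_left, norm_neg, norm_smul,
        Real.norm_eq_abs, abs_of_pos hτpos] at hGPz
      have hGPz' : -(τ * ⟪y, ξ' t⟫) + ‖ξ' t‖ / (2 * (c / lam)) * (τ * ‖y‖) ^ 2 ≥ 0 := hGPz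
      nlinarith [hGPz', hτpos]
    have hlim : Tendsto (fun τ : ℝ => ‖ξ' t‖ / (2 * (c / lam)) * τ * ‖y‖ ^ 2)
        (𝓝[>] (0:ℝ)) (𝓝 0) := by
      have hcont : Continuous fun τ : ℝ => ‖ξ' t‖ / (2 * (c / lam)) * τ * ‖y‖ ^ 2 :=
        (continuous_const.mul continuous_id).mul continuous_const
      have := hcont.tendsto 0
      simp only [mul_zero, zero_mul] at this
      exact this.mono_left nhdsWithin_le_nhds
    exact ge_of_tendsto hlim hle
  have hcone' : ∀ y : X, ⟪gx, y⟫ ≤ 0 → ⟪y, ξ' t⟫ ≤ 0 := by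
    intro y hy
    have hev : ∀ᶠ ε in 𝓝[>] (0:ℝ), ⟪y, ξ' t⟫ ≤ ε * ⟪gx, ξ' t⟫ := by
      filter_upwards [self_mem_nhdsWithin] with ε hε
      rw [mem_Ioi] at hε
      have h1 : ⟪gx, y - ε • gx⟫ < 0 := by
        rw [inner_sub_right, real_inner_smul_right, hgxsq]
        nlinarith [mul_pos hε (pow_pos hgxpos 2)]
      have h2 := hcone _ h1
      rw [inner_sub_left, real_inner_smul_left] at h2
      have h3 : ⟪gx, ξ' t⟫ = ⟪ξ' t, gx⟫ := real_inner_comm _ _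
      nlinarith [h2]
    have hlim : Tendsto (fun ε : ℝ => ε * ⟪gx, ξ' t⟫) (𝓝[>] (0:ℝ)) (𝓝 0) := by
      have hcont : Continuous fun ε : ℝ => ε * ⟪gx, ξ' t⟫ :=
        continuous_id.mul continuous_const
      have := hcont.tendsto 0
      simp only [zero_mul] at this
      exact this.mono_left nhdsWithin_le_nhds
    exact ge_of_tendsto hlim hev
  -- ξ' t is a multiple of the gradient
  set α : ℝ := ⟪gx, ξ' t⟫ / ‖gx‖ ^ 2 with hα
  have hy0 : ξ' t = α • gx := by
    set y₀ := ξ' t - α • gx with hy₀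
    have horth : ⟪gx, y₀⟫ = 0 := by
      rw [hy₀, inner_sub_right, real_inner_smul_right, hgxsq, hα]
      field_simp
      ring
    have ha := hcone' y₀ (le_of_eq horth)
    have hb := hcone' (-y₀) (by rw [inner_neg_right, horth, neg_zero])
    rw [inner_neg_left] at hb
    have hzero : ⟪y₀, ξ' t⟫ = 0 := le_antisymm ha (by linarith)
    have hself : ⟪y₀, y₀⟫ = 0 := by
      calc ⟪y₀, y₀⟫ = ⟪y₀, ξ' t⟫ - α * ⟪y₀, gx⟫ := by
            nth_rewrite 2 [hy₀]
            rw [inner_sub_right, real_inner_smul_right]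
          _ = 0 := by
            have h4 : ⟪y₀, gx⟫ = 0 := by rw [real_inner_comm]; exact horth
            rw [hzero, h4, mul_zero, sub_zero]
    have hy0' : y₀ = 0 := inner_self_eq_zero.1 hself
    rw [hy₀] at hy0'
    exact sub_eq_zero.1 hy0'
  -- boundary membership
  have hfront : xt ∈ frontier (Zs (w t)) := by
    rw [← closure_diff_interior]
    refine ⟨subset_closure hxtZ, ?_⟩
    intro hint
    obtain ⟨ε, hε, hball⟩ := Metric.isOpen_iff.1 isOpen_interior xt hint
    have hdir' : Tendsto (fun τ : ℝ => (G (xt + τ • gx) (w t) - G xt (w t)) / τ)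
        (𝓝[>] (0:ℝ)) (𝓝 ⟪gx, gx⟫) :=
      (hgradx (w t) xt hxtZ gx).mono_left (nhdsWithin_mono 0 fun τ hτ => ne_of_gt hτ)
    have hposin : (0:ℝ) < ⟪gx, gx⟫ := by rw [hgxsq]; positivity
    have hev1 : ∀ᶠ τ in 𝓝[>] (0:ℝ), 0 < (G (xt + τ • gx) (w t) - G xt (w t)) / τ :=
      hdir'.eventually_const_lt hposin
    have hev2 : ∀ᶠ τ in 𝓝[>] (0:ℝ), τ < ε / ‖gx‖ :=
      (eventually_lt_nhds (by positivity : (0:ℝ) < ε / ‖gx‖)).filter_mono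
        nhdsWithin_le_nhds
    obtain ⟨τ, ⟨hτ1, hτ2⟩, hτ3⟩ := ((hev1.and hev2).and self_mem_nhdsWithin).exists
    have hτ3 : (0:ℝ) < τ := hτ3
    have hGgt : 1 < G (xt + τ • gx) (w t) := by
      have hnum : 0 < G (xt + τ • gx) (w t) - G xt (w t) := by
        rcases div_pos_iff.1 hτ1 with ⟨h1, _⟩ | ⟨_, h2⟩
        · exact h1
        · linarith
      rw [hG1] at hnum
      linarith
    have hmemZ : xt + τ • gx ∈ Zs (w t) := by
      apply interior_subset
      apply hball
      rw [mem_ball, dist_eq_norm]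
      have : xt + τ • gx - xt = τ • gx := by abel
      rw [this, norm_smul, Real.norm_eq_abs, abs_of_pos hτ3]
      rw [lt_div_iff₀ hgxpos] at hτ2
      exact hτ2
    rw [hZ] at hmemZ
    have : G (xt + τ • gx) (w t) ≤ 1 := hmemZ
    linarith
  have hinf : infDist xt (frontier (Zs (w t))) = 0 := infDist_zero_of_mem hfront
  -- chain rule and local maximum
  have hDx : HasDerivAt (fun s => u s - ξ s) (u' t - ξ' t) t := hDu.sub hDξ
  have hgdir := hgradx (w t) xt hxtZ (u' t - ξ' t)
  have hchain : HasDerivAt (fun s => G (u s - ξ s) (w s))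
      (⟪gx, u' t - ξ' t⟫ + Gw xt (w t) (w' t)) t :=
    hasDerivAt_comp_curve G hGlip Gw hgradw hGwcont (fun s => u s - ξ s) w t
      (u' t - ξ' t) (w' t) hDx hDw _ hgdir
  have hmax : IsLocalMax (fun s => G (u s - ξ s) (w s)) t := by
    filter_upwards [Ioo_mem_nhds ht.1 ht.2] with s hs
    have hsZ := hmem s (Ioo_subset_Icc_self hs)
    rw [hZ] at hsZ
    show G (u s - ξ s) (w s) ≤ G (u t - ξ t) (w t)
    rw [← hxt, hG1]
    exact hsZ
  have hD0 : ⟪gx, u' t - ξ' t⟫ + Gw xt (w t) (w' t) = 0 :=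
    hmax.hasDerivAt_eq_zero hchain
  -- conclusion
  rw [hy0] at hD0
  rw [hinf, zero_add, hy0]
  have hkey : ⟪α • gx, (u' t - α • gx) + (Gw xt (w t) (w' t) / ‖gx‖ ^ 2) • gx⟫
      = α * (⟪gx, u' t - α • gx⟫ + Gw xt (w t) (w' t)) := by
    rw [inner_add_right, real_inner_smul_left, real_inner_smul_left,
      real_inner_smul_right, hgxsq]
    have hne : ‖gx‖ ^ 2 ≠ 0 := by positivity
    field_simp
  rw [hkey, hD0, mul_zero]
end

section
/- Let X be a real Hilbert space and T > 0. Let v_n ∈ L¹(0,T; X) for n ∈ ℕ ∪ {0} and g_n ∈ L¹(0,T; ℝ) for n ∈ ℕ ∪ {0} be such that: (i) ∫₀ᵀ ⟨v_n(t), φ(t)⟩ dt → ∫₀ᵀ ⟨v₀(t), φ(t)⟩ dt as n → ∞ for every continuous φ : [0,T] → X; (ii) ∫₀ᵀ |g_n(t) − g₀(t)| dt → 0; (iii) |v_n(t)| ≤ g_n(t) a.e. for all n ∈ ℕ; (iv) |v₀(t)| = g₀(t) a.e. Then ∫₀ᵀ |v_n(t) − v₀(t)| dt → 0 as n → ∞.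 -/
open MeasureTheory Set Filter Metric
open scoped RealInnerProductSpace Topology

lemma aux_norm_sub_inner_le {X : Type*} [NormedAddCommGroup X] [InnerProductSpace ℝ X]
    (b u : X) : ‖b‖ - ⟪b, u⟫ ≤ ‖b - ‖b‖ • u‖ := by
  rcases eq_or_ne b 0 with rfl | hb
  · simp
  · have hb0 : 0 < ‖b‖ := norm_pos_iff.mpr hb
    have h1 : ‖b‖ * (‖b‖ - ⟪b, u⟫) = ⟪b, b - ‖b‖ • u⟫ := by
      rw [inner_sub_right, real_inner_smul_right, real_inner_self_eq_norm_sq]; ring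
    have h2 : ⟪b, b - ‖b‖ • u⟫ ≤ ‖b‖ * ‖b - ‖b‖ • u‖ := real_inner_le_norm _ _
    nlinarith

lemma aux_key {X : Type*} [NormedAddCommGroup X] [InnerProductSpace ℝ X]
    (a b u : X) (hu : ‖u‖ ≤ 1) (c : ℝ) (hc : 0 < c) :
    ‖a - b‖ ≤ |‖a‖ - ‖b‖| + c * ‖b‖ + (‖a‖ - ⟪a, u⟫) / (2 * c) + c * ‖a‖
      + ‖b - ‖b‖ • u‖ / (2 * c) := by
  set h := ‖a‖ - ⟪a, u⟫ with hh
  set d := ‖b - ‖b‖ • u‖ with hd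
  have hinner : ⟪a, u⟫ ≤ ‖a‖ := by
    calc ⟪a, u⟫ ≤ ‖a‖ * ‖u‖ := real_inner_le_norm a u
    _ ≤ ‖a‖ * 1 := by nlinarith [norm_nonneg a]
    _ = ‖a‖ := mul_one _
  have hpos : 0 ≤ h := by simp [hh]; linarith
  have hdpos : 0 ≤ d := norm_nonneg _
  have hsplit : ⟪a, b⟫ = ‖b‖ * ⟪a, u⟫ + ⟪a, b - ‖b‖ • u⟫ := by
    rw [inner_sub_right, real_inner_smul_right]; ring
  have h3 : -(‖a‖ * d) ≤ ⟪a, b - ‖b‖ • u⟫ := by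
    have := abs_real_inner_le_norm a (b - ‖b‖ • u)
    rw [abs_le] at this; exact this.1
  have hsq : ‖a - b‖ ^ 2 ≤ (‖a‖ - ‖b‖) ^ 2 + 2 * ‖b‖ * h + 2 * ‖a‖ * d := by
    have := norm_sub_sq_real a b
    nlinarith [norm_nonneg b]
  have hq : h / (2 * c) * (2 * c) = h := div_mul_cancel₀ _ (by positivity)
  have hr : d / (2 * c) * (2 * c) = d := div_mul_cancel₀ _ (by positivity)
  set q := h / (2 * c)
  set r := d / (2 * c)
  have hq0 : 0 ≤ q := by positivity
  have hr0 : 0 ≤ r := by positivity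
  have habs : 0 ≤ |‖a‖ - ‖b‖| := abs_nonneg _
  have habs2 : (‖a‖ - ‖b‖) ^ 2 = |‖a‖ - ‖b‖| ^ 2 := (sq_abs _).symm
  have hsum : ‖a - b‖ ^ 2 ≤ (|‖a‖ - ‖b‖| + (c * ‖b‖ + q) + (c * ‖a‖ + r)) ^ 2 := by
    nlinarith [sq_nonneg (c * ‖b‖ - q), sq_nonneg (c * ‖a‖ - r), norm_nonneg a, norm_nonneg b,
      mul_nonneg (mul_nonneg habs (by positivity : (0:ℝ) ≤ c * ‖b‖ + q)) (by positivity : (0:ℝ) ≤ 1),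
      mul_nonneg habs (add_nonneg (by positivity : (0:ℝ) ≤ c * ‖b‖ + q) (by positivity : (0:ℝ) ≤ c * ‖a‖ + r)),
      mul_nonneg (by positivity : (0:ℝ) ≤ c * ‖b‖ + q) (by positivity : (0:ℝ) ≤ c * ‖a‖ + r)]
  have := Real.sqrt_le_sqrt hsum
  rw [Real.sqrt_sq (norm_nonneg _), Real.sqrt_sq (by positivity)] at this
  linarith

lemma aux_approx {X : Type*} [NormedAddCommGroup X] [InnerProductSpace ℝ X] [CompleteSpace X]
    (T : ℝ) (hT : 0 < T) (v₀ : ℝ → X) (hv₀ : IntegrableOn v₀ (Ioo 0 T))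
    (δ : ℝ) (hδ : 0 < δ) :
    ∃ φ : ℝ → X, Continuous φ ∧ (∀ t, ‖φ t‖ ≤ 1) ∧
      ∫ t in Ioo 0 T, ‖v₀ t - ‖v₀ t‖ • φ t‖ < δ := by
  set f : ℝ → X := (Ioo 0 T).indicator v₀ with hf
  have hfi : Integrable f := by
    rw [hf, integrable_indicator_iff measurableSet_Ioo]; exact hv₀
  obtain ⟨w, _, hwle, hwcont, hwint⟩ :=
    hfi.exists_hasCompactSupport_integral_sub_le (ε := δ / 8) (by positivity)
  set δ₂ : ℝ := δ / (4 * (T + 1)) with hδ₂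
  have hδ₂pos : 0 < δ₂ := by positivity
  set φ : ℝ → X := fun t => (max δ₂ ‖w t‖)⁻¹ • w t with hφ
  have hmpos : ∀ t, 0 < max δ₂ ‖w t‖ := fun t => lt_max_of_lt_left hδ₂pos
  have hφcont : Continuous φ := by
    apply Continuous.smul _ hwcont
    exact (continuous_const.max hwcont.norm).inv₀ fun t => (hmpos t).ne'
  have hφle : ∀ t, ‖φ t‖ ≤ 1 := by
    intro t
    rw [hφ, norm_smul, norm_inv, Real.norm_of_nonneg (hmpos t).le,
      inv_mul_le_iff₀ (hmpos t), mul_one]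
    exact le_max_right _ _
  refine ⟨φ, hφcont, hφle, ?_⟩
  have hpt : ∀ t ∈ Ioo 0 T, ‖v₀ t - ‖v₀ t‖ • φ t‖ ≤ 2 * ‖v₀ t - w t‖ + δ₂ := by
    intro t _
    have hw : w t = (max δ₂ ‖w t‖) • φ t := by
      rw [hφ]; simp [smul_smul, mul_inv_cancel₀ (hmpos t).ne']
    have h1 : ‖v₀ t - ‖v₀ t‖ • φ t‖ ≤ ‖v₀ t - w t‖ + ‖w t - ‖v₀ t‖ • φ t‖ := by
      have he : v₀ t - ‖v₀ t‖ • φ t = (v₀ t - w t) + (w t - ‖v₀ t‖ • φ t) := by abel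
      rw [he]; exact norm_add_le _ _
    have h2 : ‖w t - ‖v₀ t‖ • φ t‖ = |max δ₂ ‖w t‖ - ‖v₀ t‖| * ‖φ t‖ := by
      conv_lhs => rw [hw]
      rw [← sub_smul, norm_smul, Real.norm_eq_abs]
    have hA : ‖v₀ t‖ ≤ ‖w t‖ + ‖v₀ t - w t‖ := by
      have he : v₀ t = w t + (v₀ t - w t) := by abel
      calc ‖v₀ t‖ = ‖w t + (v₀ t - w t)‖ := by rw [← he]
        _ ≤ _ := norm_add_le _ _
    have hB : ‖w t‖ - ‖v₀ t‖ ≤ ‖v₀ t - w t‖ := by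
      calc ‖w t‖ - ‖v₀ t‖ ≤ ‖w t - v₀ t‖ := norm_sub_norm_le _ _
        _ = ‖v₀ t - w t‖ := by rw [norm_sub_rev]
    have h3 : |max δ₂ ‖w t‖ - ‖v₀ t‖| ≤ δ₂ + ‖v₀ t - w t‖ := by
      rw [abs_le]
      constructor
      · have := le_max_right δ₂ ‖w t‖
        linarith
      · have hm : max δ₂ ‖w t‖ ≤ δ₂ + ‖w t‖ :=
          max_le (by linarith [norm_nonneg (w t)]) (by linarith)
        linarith
    calc ‖v₀ t - ‖v₀ t‖ • φ t‖ ≤ ‖v₀ t - w t‖ + |max δ₂ ‖w t‖ - ‖v₀ t‖| * ‖φ t‖ := by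
          rw [← h2]; exact h1
      _ ≤ ‖v₀ t - w t‖ + (δ₂ + ‖v₀ t - w t‖) * 1 := by
          apply add_le_add_right
          apply mul_le_mul h3 (hφle t) (norm_nonneg _)
          linarith [norm_nonneg (v₀ t - w t), hδ₂pos]
      _ = 2 * ‖v₀ t - w t‖ + δ₂ := by ring
  have hwi : IntegrableOn (fun t => v₀ t - w t) (Ioo 0 T) := hv₀.sub hwint.integrableOn
  have hconsti : IntegrableOn (fun _ : ℝ => δ₂) (Ioo 0 T) :=
    integrableOn_const measure_Ioo_lt_top.ne
  have hint : ∫ t in Ioo 0 T, ‖v₀ t - ‖v₀ t‖ • φ t‖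
      ≤ ∫ t in Ioo 0 T, (2 * ‖v₀ t - w t‖ + δ₂) := by
    apply integral_mono_of_nonneg (Eventually.of_forall fun t => norm_nonneg _)
    · exact (hwi.norm.const_mul 2).add hconsti
    · filter_upwards [ae_restrict_mem measurableSet_Ioo] with t ht using hpt t ht
  have hsub : ∫ t in Ioo 0 T, ‖v₀ t - w t‖ ≤ δ / 8 := by
    have heq : ∀ t ∈ Ioo 0 T, ‖v₀ t - w t‖ = ‖f t - w t‖ := by
      intro t ht; rw [hf, indicator_of_mem ht]
    calc ∫ t in Ioo 0 T, ‖v₀ t - w t‖ = ∫ t in Ioo 0 T, ‖f t - w t‖ :=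
          setIntegral_congr_fun measurableSet_Ioo heq
      _ ≤ ∫ t, ‖f t - w t‖ := by
          apply setIntegral_le_integral (hfi.sub hwint).norm
          exact Eventually.of_forall fun t => norm_nonneg _
      _ ≤ δ / 8 := hwle
  have hTmeas : (volume (Ioo (0:ℝ) T)).toReal = T := by simp [hT.le]
  have hsplit : ∫ t in Ioo 0 T, (2 * ‖v₀ t - w t‖ + δ₂)
      = 2 * (∫ t in Ioo 0 T, ‖v₀ t - w t‖) + T * δ₂ := by
    rw [integral_add (hwi.norm.const_mul 2) hconsti, integral_const_mul, integral_const,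
      measureReal_restrict_apply_univ, measureReal_def, hTmeas, smul_eq_mul]
  have hlast : T * δ₂ ≤ δ / 4 := by
    have h1 : T * δ₂ * (4 * (T + 1)) = δ * T := by rw [hδ₂]; field_simp
    nlinarith [mul_pos hT hδ₂pos]
  calc ∫ t in Ioo 0 T, ‖v₀ t - ‖v₀ t‖ • φ t‖ ≤ 2 * (∫ t in Ioo 0 T, ‖v₀ t - w t‖) + T * δ₂ := by
        rw [← hsplit]; exact hint
    _ ≤ 2 * (δ / 8) + δ / 4 := by linarith
    _ < δ := by linarith

set_option maxHeartbeats 1000000 in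
/-- The `L¹` convergence lemma: if `v_n ⇀ v₀` weakly against continuous test functions,
the dominating functions `g_n → g₀` in `L¹`, `‖v_n‖ ≤ g_n` a.e. and `‖v₀‖ = g₀` a.e.,
then `v_n → v₀` strongly in `L¹(0,T;X)`. -/
theorem weak_plus_norm_implies_strong
    {X : Type*} [NormedAddCommGroup X] [InnerProductSpace ℝ X] [CompleteSpace X]
    (T : ℝ) (hT : 0 < T)
    (v : ℕ → ℝ → X) (v₀ : ℝ → X) (g : ℕ → ℝ → ℝ) (g₀ : ℝ → ℝ)
    (hv : ∀ n, IntegrableOn (v n) (Ioo 0 T)) (hv₀ : IntegrableOn v₀ (Ioo 0 T))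
    (hg : ∀ n, IntegrableOn (g n) (Ioo 0 T)) (hg₀ : IntegrableOn g₀ (Ioo 0 T))
    (hweak : ∀ φ : ℝ → X, ContinuousOn φ (Icc 0 T) →
      Tendsto (fun n => ∫ t in Ioo 0 T, ⟪v n t, φ t⟫) atTop
        (𝓝 (∫ t in Ioo 0 T, ⟪v₀ t, φ t⟫)))
    (hgconv : Tendsto (fun n => ∫ t in Ioo 0 T, |g n t - g₀ t|) atTop (𝓝 0))
    (hdom : ∀ n, ∀ᵐ t ∂(volume.restrict (Ioo 0 T)), ‖v n t‖ ≤ g n t)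
    (hnorm : ∀ᵐ t ∂(volume.restrict (Ioo 0 T)), ‖v₀ t‖ = g₀ t) :
    Tendsto (fun n => ∫ t in Ioo 0 T, ‖v n t - v₀ t‖) atTop (𝓝 0) := by
  rw [Metric.tendsto_atTop]
  intro ε hε
  set G : ℝ := ∫ t in Ioo 0 T, g₀ t with hG
  have hGnorm : ∫ t in Ioo 0 T, ‖v₀ t‖ = G :=
    integral_congr_ae hnorm
  have hG0 : 0 ≤ G := by
    rw [← hGnorm]; exact integral_nonneg fun t => norm_nonneg _
  set c : ℝ := min 1 (ε / (8 * (G + 1))) with hc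
  have hcpos : 0 < c := lt_min one_pos (by positivity)
  have hc1 : c ≤ 1 := min_le_left _ _
  have hc2 : c ≤ ε / (8 * (G + 1)) := min_le_right _ _
  set η : ℝ := min 1 (c * ε / 16) with hη
  have hηpos : 0 < η := lt_min one_pos (by positivity)
  have hη1 : η ≤ 1 := min_le_left _ _
  have hη2 : η ≤ c * ε / 16 := min_le_right _ _
  -- choose the test function φ
  obtain ⟨φ, hφcont, hφle, hK⟩ := aux_approx T hT v₀ hv₀ (c * ε / 16) (by positivity)
  set d : ℝ → ℝ := fun t => ‖v₀ t - ‖v₀ t‖ • φ t‖ with hd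
  set K : ℝ := ∫ t in Ioo 0 T, d t with hKdef
  have hK0 : 0 ≤ K := integral_nonneg fun t => norm_nonneg _
  -- integrability facts
  have hφm : AEStronglyMeasurable φ (volume.restrict (Ioo 0 T)) :=
    hφcont.aestronglyMeasurable
  have hinner : ∀ n, IntegrableOn (fun t => ⟪v n t, φ t⟫) (Ioo 0 T) := by
    intro n
    apply Integrable.mono' (hv n).norm ((hv n).aestronglyMeasurable.inner hφm)
    refine Eventually.of_forall fun t => ?_
    rw [Real.norm_eq_abs]
    calc |⟪v n t, φ t⟫| ≤ ‖v n t‖ * ‖φ t‖ := abs_real_inner_le_norm _ _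
      _ ≤ ‖v n t‖ * 1 := by nlinarith [norm_nonneg (v n t), hφle t]
      _ = ‖v n t‖ := mul_one _
  have hinner0 : IntegrableOn (fun t => ⟪v₀ t, φ t⟫) (Ioo 0 T) := by
    apply Integrable.mono' hv₀.norm (hv₀.aestronglyMeasurable.inner hφm)
    refine Eventually.of_forall fun t => ?_
    rw [Real.norm_eq_abs]
    calc |⟪v₀ t, φ t⟫| ≤ ‖v₀ t‖ * ‖φ t‖ := abs_real_inner_le_norm _ _
      _ ≤ ‖v₀ t‖ * 1 := by nlinarith [norm_nonneg (v₀ t), hφle t]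
      _ = ‖v₀ t‖ := mul_one _
  have hdint : IntegrableOn d (Ioo 0 T) := by
    apply Integrable.mono' (hv₀.norm.const_mul 2)
      ((hv₀.aestronglyMeasurable.sub (hv₀.aestronglyMeasurable.norm.smul hφm)).norm)
    refine Eventually.of_forall fun t => ?_
    rw [Real.norm_eq_abs, abs_of_nonneg (norm_nonneg _)]
    calc ‖v₀ t - ‖v₀ t‖ • φ t‖ ≤ ‖v₀ t‖ + ‖‖v₀ t‖ • φ t‖ := norm_sub_le _ _
      _ = ‖v₀ t‖ + ‖v₀ t‖ * ‖φ t‖ := by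
          rw [norm_smul, Real.norm_eq_abs, abs_of_nonneg (norm_nonneg _)]
      _ ≤ 2 * ‖v₀ t‖ := by nlinarith [hφle t, norm_nonneg (v₀ t), norm_nonneg (φ t)]
  set I : ℝ := ∫ t in Ioo 0 T, ⟪v₀ t, φ t⟫ with hI
  set In : ℕ → ℝ := fun n => ∫ t in Ioo 0 T, ⟪v n t, φ t⟫ with hIn
  set V : ℕ → ℝ := fun n => ∫ t in Ioo 0 T, ‖v n t‖ with hV
  set Gn : ℕ → ℝ := fun n => ∫ t in Ioo 0 T, g n t with hGn
  set en : ℕ → ℝ := fun n => ∫ t in Ioo 0 T, |g n t - g₀ t| with hen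
  have hIconv : Tendsto In atTop (𝓝 I) := hweak φ hφcont.continuousOn
  obtain ⟨N₁, hN₁⟩ := Metric.tendsto_atTop.mp hIconv η hηpos
  obtain ⟨N₂, hN₂⟩ := Metric.tendsto_atTop.mp hgconv η hηpos
  refine ⟨max N₁ N₂, fun n hn => ?_⟩
  have hn₁ : N₁ ≤ n := le_of_max_le_left hn
  have hn₂ : N₂ ≤ n := le_of_max_le_right hn
  have hen0 : 0 ≤ en n := integral_nonneg fun t => abs_nonneg _
  have henη : en n ≤ η := by
    have := hN₂ n hn₂
    rw [Real.dist_eq] at this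
    rw [abs_sub_comm] at this
    calc en n ≤ |en n - 0| := by rw [sub_zero]; exact le_abs_self _
      _ ≤ η := by rw [abs_sub_comm]; exact this.le
  have hInη : I - η ≤ In n := by
    have := hN₁ n hn₁
    rw [Real.dist_eq, abs_lt] at this
    linarith [this.1]
  -- integral comparison facts
  have hVle : V n ≤ Gn n := integral_mono_ae (hv n).norm (hg n) (hdom n)
  have hGnle : Gn n ≤ G + en n := by
    have h1 : ∫ t in Ioo 0 T, (g n t - g₀ t) ≤ en n :=
      integral_mono ((hg n).sub hg₀) ((hg n).sub hg₀).abs fun t => le_abs_self _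
    rw [integral_sub (hg n) hg₀] at h1
    linarith
  have hInV : In n ≤ V n := by
    apply integral_mono (hinner n) (hv n).norm
    intro t
    calc ⟪v n t, φ t⟫ ≤ ‖v n t‖ * ‖φ t‖ := real_inner_le_norm _ _
      _ ≤ ‖v n t‖ * 1 := by nlinarith [norm_nonneg (v n t), hφle t]
      _ = ‖v n t‖ := mul_one _
  have hGI : G - I ≤ K := by
    have h1 : ∫ t in Ioo 0 T, (‖v₀ t‖ - ⟪v₀ t, φ t⟫) ≤ K := by
      apply integral_mono (hv₀.norm.sub hinner0) hdint
      intro t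
      exact aux_norm_sub_inner_le (v₀ t) (φ t)
    rw [integral_sub hv₀.norm hinner0, hGnorm] at h1
    linarith
  -- bound on ∫ |‖v n‖ - ‖v₀‖|
  have hAint : IntegrableOn (fun t => |‖v n t‖ - ‖v₀ t‖|) (Ioo 0 T) :=
    ((hv n).norm.sub hv₀.norm).abs
  have hA : ∫ t in Ioo 0 T, |‖v n t‖ - ‖v₀ t‖| ≤ (Gn n - V n) + en n := by
    have hi1 : IntegrableOn (fun t => g n t - ‖v n t‖) (Ioo 0 T) := (hg n).sub (hv n).norm
    have hi2 : IntegrableOn (fun t => |g n t - g₀ t|) (Ioo 0 T) := ((hg n).sub hg₀).abs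
    have h1 : ∫ t in Ioo 0 T, |‖v n t‖ - ‖v₀ t‖|
        ≤ ∫ t in Ioo 0 T, ((g n t - ‖v n t‖) + |g n t - g₀ t|) := by
      apply integral_mono_of_nonneg (Eventually.of_forall fun t => abs_nonneg _)
        (hi1.add hi2)
      filter_upwards [hdom n, hnorm] with t h1 h2
      simp only [Pi.add_apply]
      rw [← h2]
      have := abs_sub_abs_le_abs_sub (‖v n t‖) (‖v₀ t‖)
      rw [abs_le]
      constructor
      · have h3 : ‖v₀ t‖ - ‖v n t‖ ≤ (g n t - ‖v n t‖) + (g₀ t - g n t) + 0 := by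
          rw [h2]; ring_nf; linarith
        have := neg_abs_le (g n t - g₀ t)
        rw [h2]
        nlinarith [norm_nonneg (v n t)]
      · have := le_abs_self (g n t - g₀ t)
        rw [h2]
        nlinarith [norm_nonneg (v₀ t)]
    rw [integral_add hi1 hi2, integral_sub (hg n) (hv n).norm] at h1
    exact h1
  -- main pointwise estimate integrated
  have hS : ∫ t in Ioo 0 T, ‖v n t - v₀ t‖
      ≤ (∫ t in Ioo 0 T, |‖v n t‖ - ‖v₀ t‖|) + c * G + (V n - In n) / (2 * c)
        + c * V n + K / (2 * c) := by
    have hf2 : IntegrableOn (fun t => c * ‖v₀ t‖) (Ioo 0 T) := hv₀.norm.const_mul c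
    have hf3 : IntegrableOn (fun t => (‖v n t‖ - ⟪v n t, φ t⟫) / (2 * c)) (Ioo 0 T) :=
      ((hv n).norm.sub (hinner n)).div_const (2 * c)
    have hf4 : IntegrableOn (fun t => c * ‖v n t‖) (Ioo 0 T) := (hv n).norm.const_mul c
    have hf5 : IntegrableOn (fun t => d t / (2 * c)) (Ioo 0 T) := hdint.div_const (2 * c)
    have h12 : IntegrableOn (fun t => |‖v n t‖ - ‖v₀ t‖| + c * ‖v₀ t‖) (Ioo 0 T) :=
      hAint.add hf2
    have h123 : IntegrableOn (fun t => |‖v n t‖ - ‖v₀ t‖| + c * ‖v₀ t‖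
      + (‖v n t‖ - ⟪v n t, φ t⟫) / (2 * c)) (Ioo 0 T) := h12.add hf3
    have h1234 : IntegrableOn (fun t => |‖v n t‖ - ‖v₀ t‖| + c * ‖v₀ t‖
      + (‖v n t‖ - ⟪v n t, φ t⟫) / (2 * c) + c * ‖v n t‖) (Ioo 0 T) := h123.add hf4
    have h1 : ∫ t in Ioo 0 T, ‖v n t - v₀ t‖
        ≤ ∫ t in Ioo 0 T, (|‖v n t‖ - ‖v₀ t‖| + c * ‖v₀ t‖
          + (‖v n t‖ - ⟪v n t, φ t⟫) / (2 * c) + c * ‖v n t‖ + d t / (2 * c)) := by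
      apply integral_mono_of_nonneg (Eventually.of_forall fun t => norm_nonneg _)
        (h1234.add hf5)
      refine Eventually.of_forall fun t => ?_
      exact aux_key (v n t) (v₀ t) (φ t) (hφle t) c hcpos
    rw [integral_add h1234 hf5,
      integral_add h123 hf4,
      integral_add h12 hf3,
      integral_add hAint hf2,
      integral_const_mul, integral_const_mul, integral_div, integral_div,
      integral_sub (hv n).norm (hinner n), hGnorm] at h1
    exact h1
  -- final numeric estimate
  have hS0 : 0 ≤ ∫ t in Ioo 0 T, ‖v n t - v₀ t‖ := integral_nonneg fun t => norm_nonneg _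
  rw [Real.dist_eq, sub_zero, abs_of_nonneg hS0]
  have hb1 : Gn n - V n ≤ K + 2 * η := by
    have : Gn n ≤ G + η := le_trans hGnle (by linarith)
    linarith [hInV, hInη, hGI]
  have hb2 : V n - In n ≤ K + 2 * η := by
    have : Gn n ≤ G + η := le_trans hGnle (by linarith)
    linarith [hVle, hInη, hGI]
  have hb3 : V n ≤ G + η := by linarith [hVle, hGnle, henη]
  have hAb : ∫ t in Ioo 0 T, |‖v n t‖ - ‖v₀ t‖| ≤ K + 3 * η := by linarith [hA, hb1, henη]
  have hdiv1 : (V n - In n) / (2 * c) ≤ 3 * ε / 32 := by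
    rw [div_le_iff₀ (by positivity : (0:ℝ) < 2 * c)]
    nlinarith [hb2, hη2, hK.le]
  have hdiv2 : K / (2 * c) ≤ ε / 32 := by
    rw [div_le_iff₀ (by positivity : (0:ℝ) < 2 * c)]
    nlinarith [hK.le]
  have hcG : c * G + c * V n ≤ ε / 4 := by
    have h1 : c * (2 * G + 2) ≤ ε / 8 * (1 / (G + 1)) * (2 * G + 2) := by
      have : c ≤ ε / 8 * (1 / (G + 1)) := by
        rw [hc]
        calc min 1 (ε / (8 * (G + 1))) ≤ ε / (8 * (G + 1)) := min_le_right _ _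
          _ = ε / 8 * (1 / (G + 1)) := by
              have hG1 : G + 1 ≠ 0 := by positivity
              field_simp
      nlinarith [hG0]
    have h2 : ε / 8 * (1 / (G + 1)) * (2 * G + 2) = ε / 4 := by
      field_simp
      ring
    have h3 : c * V n ≤ c * (G + η) := by nlinarith [hb3, hcpos.le]
    nlinarith [hcpos.le, hG0, hη1]
  calc ∫ t in Ioo 0 T, ‖v n t - v₀ t‖
      ≤ (K + 3 * η) + c * G + (V n - In n) / (2 * c) + c * V n + K / (2 * c) := by
        linarith [hS, hAb]
    _ ≤ (K + 3 * η) + ε / 4 + 3 * ε / 32 + ε / 32 := by linarith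
    _ < ε := by
        have hKe : K + 3 * η ≤ ε / 4 := by
          nlinarith [hK.le, hη2, mul_nonneg (sub_nonneg.mpr hc1) hε.le]
        linarith
end

section
/- Let Hypothesis (C) hold, let (u_i, w_i) ∈ W^{1,1}(0,T; X) × W^{1,1}(0,T; W) and x_i⁰ ∈ Z(w_i(0)) for i = 1, 2, and let ξ_i ∈ W^{1,1}(0,T; X) be the solutions of the sweeping process (GP) with x_i = u_i − ξ_i. For i = 1,2 define A_i(t) = ⟨ξ_i'(t), ∇ₓG(x_i(t), w_i(t))⟩ and B_i(t) = ⟨u_i'(t), ∇ₓG(x_i(t), w_i(t))⟩ + ⟨w_i'(t), ∇_wG(x_i(t), w_i(t))⟩_{W,W'}. Then for a.e. t ∈ (0,T): |A₁(t) − A₂(t)| + (d/dt)|G(x₁(t), w₁(t)) − G(x₂(t), w₂(t))| ≤ |B₁(t) − B₂(t)|, and |ξ₁'(t) − ξ₂'(t)| ≤ (1/c)|A₁(t) − A₂(t)| + (1/c)(|u₁'(t)| + (K₁/c)|w₁'(t)|_W)·|∇ₓG(x₁(t), w₁(t)) − ∇ₓG(x₂(t), w₂(t))|. -/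
open MeasureTheory Set Filter Metric
open scoped RealInnerProductSpace Topology

set_option linter.unusedSectionVars false
set_option linter.unusedVariables false
set_option maxHeartbeats 1000000

/-- a.e. FTC: derivative of the primitive of an integrable function. -/
lemma aux_ae_hasDerivAt_primitive {Y : Type*} [NormedAddCommGroup Y] [NormedSpace ℝ Y]
    [CompleteSpace Y] {g : ℝ → Y} (hg : Integrable g) :
    ∀ᵐ t ∂(volume : Measure ℝ), HasDerivAt (fun τ => ∫ s in (0:ℝ)..τ, g s) (g t) t := by
  have hloc : LocallyIntegrable g volume := hg.locallyIntegrable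
  filter_upwards [(IsUnifLocDoublingMeasure.vitaliFamily (volume : Measure ℝ)
      1).ae_tendsto_average_norm_sub hloc] with t ht
  have hright := ht.comp (Real.tendsto_Icc_vitaliFamily_right t)
  have hleft := ht.comp (Real.tendsto_Icc_vitaliFamily_left t)
  rw [hasDerivAt_iff_tendsto_slope]
  have hslope_right : ∀ y : ℝ, t < y →
      ‖slope (fun τ => ∫ s in (0:ℝ)..τ, g s) t y - g t‖ ≤ ⨍ s in Icc t y, ‖g s - g t‖ := by
    intro y hy
    have hint : (∫ s in (0:ℝ)..y, g s) - ∫ s in (0:ℝ)..t, g s = ∫ s in t..y, g s :=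
      intervalIntegral.integral_interval_sub_left (hg.intervalIntegrable)
        (hg.intervalIntegrable)
    have h1 : slope (fun τ => ∫ s in (0:ℝ)..τ, g s) t y - g t
        = (y - t)⁻¹ • ∫ s in t..y, (g s - g t) := by
      rw [slope_def_module]
      rw [intervalIntegral.integral_sub (hg.intervalIntegrable)
        (intervalIntegrable_const)]
      rw [intervalIntegral.integral_const, hint]
      rw [smul_sub]
      congr 1
      rw [smul_smul, inv_mul_cancel₀ (by linarith), one_smul]
    rw [h1]
    rw [norm_smul, Real.norm_eq_abs, abs_inv, abs_of_pos (by linarith : (0:ℝ) < y - t)]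
    have h2 : ‖∫ s in t..y, (g s - g t)‖ ≤ ∫ s in Icc t y, ‖g s - g t‖ := by
      rw [MeasureTheory.integral_Icc_eq_integral_Ioc]
      rw [intervalIntegral.integral_of_le hy.le]
      exact norm_integral_le_integral_norm _
    have h3 : ⨍ s in Icc t y, ‖g s - g t‖
        = (y - t)⁻¹ * ∫ s in Icc t y, ‖g s - g t‖ := by
      rw [setAverage_eq, Real.volume_real_Icc_of_le (by linarith)]
      simp [smul_eq_mul]
    rw [h3]
    exact mul_le_mul_of_nonneg_left h2 (by simp [inv_nonneg]; linarith)
  have hslope_left : ∀ y : ℝ, y < t →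
      ‖slope (fun τ => ∫ s in (0:ℝ)..τ, g s) t y - g t‖ ≤ ⨍ s in Icc y t, ‖g s - g t‖ := by
    intro y hy
    have hint : (∫ s in (0:ℝ)..y, g s) - ∫ s in (0:ℝ)..t, g s = ∫ s in t..y, g s :=
      intervalIntegral.integral_interval_sub_left hg.intervalIntegrable hg.intervalIntegrable
    have h1 : slope (fun τ => ∫ s in (0:ℝ)..τ, g s) t y - g t
        = (y - t)⁻¹ • ∫ s in t..y, (g s - g t) := by
      rw [slope_def_module]
      rw [intervalIntegral.integral_sub hg.intervalIntegrable intervalIntegrable_const]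
      rw [intervalIntegral.integral_const, hint]
      rw [smul_sub]
      congr 1
      rw [smul_smul, inv_mul_cancel₀ (sub_ne_zero.mpr hy.ne), one_smul]
    rw [h1, norm_smul, Real.norm_eq_abs, abs_inv, abs_of_neg (by linarith : y - t < 0)]
    have h2 : ‖∫ s in t..y, (g s - g t)‖ ≤ ∫ s in Icc y t, ‖g s - g t‖ := by
      rw [MeasureTheory.integral_Icc_eq_integral_Ioc, intervalIntegral.integral_symm,
        norm_neg, intervalIntegral.integral_of_le hy.le]
      exact norm_integral_le_integral_norm _
    have h3 : ⨍ s in Icc y t, ‖g s - g t‖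
        = (t - y)⁻¹ * ∫ s in Icc y t, ‖g s - g t‖ := by
      rw [setAverage_eq, Real.volume_real_Icc_of_le (by linarith)]
      simp [smul_eq_mul]
    rw [h3, neg_sub]
    exact mul_le_mul_of_nonneg_left h2 (by simp [inv_nonneg]; linarith)
  have hsup : (𝓝[≠] t : Filter ℝ) = 𝓝[<] t ⊔ 𝓝[>] t := (nhdsLT_sup_nhdsGT t).symm
  rw [hsup, tendsto_sup]
  constructor
  · have : Tendsto (fun y => slope (fun τ => ∫ s in (0:ℝ)..τ, g s) t y - g t)
        (𝓝[<] t) (𝓝 0) := by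
      apply squeeze_zero_norm' _ hleft
      filter_upwards [self_mem_nhdsWithin] with y hy
      exact hslope_left y hy
    have := this.add_const (g t)
    simpa using this
  · have : Tendsto (fun y => slope (fun τ => ∫ s in (0:ℝ)..τ, g s) t y - g t)
        (𝓝[>] t) (𝓝 0) := by
      apply squeeze_zero_norm' _ hright
      filter_upwards [self_mem_nhdsWithin] with y hy
      exact hslope_right y hy
    have := this.add_const (g t)
    simpa using this

lemma aux_ae_hasDerivAt_isW11 {Y : Type*} [NormedAddCommGroup Y] [NormedSpace ℝ Y]
    [CompleteSpace Y] {T : ℝ} {f f' : ℝ → Y} (hf : IsW11 T f f') :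
    ∀ᵐ t ∂(volume.restrict (Ioo (0:ℝ) T)), HasDerivAt f (f' t) t := by
  set g : ℝ → Y := (Ioo (0:ℝ) T).indicator f' with hg_def
  have hgint : Integrable g := hf.1.integrable_indicator measurableSet_Ioo
  have hFid : ∀ τ ∈ Icc (0:ℝ) T, f τ = f 0 + ∫ s in (0:ℝ)..τ, g s := by
    intro τ hτ
    rw [hf.2 τ hτ]
    congr 1
    apply intervalIntegral.integral_congr_ae
    have hT0 : volume ({T} : Set ℝ) = 0 := Real.volume_singleton
    filter_upwards [measure_eq_zero_iff_ae_notMem.mp hT0] with s hs hmem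
    rw [uIoc_of_le hτ.1] at hmem
    have hsIoo : s ∈ Ioo (0:ℝ) T := by
      constructor
      · exact hmem.1
      · rcases lt_or_eq_of_le (hmem.2.trans hτ.2) with h | h
        · exact h
        · exact absurd h hs
    rw [hg_def, indicator_of_mem hsIoo]
  filter_upwards [ae_restrict_of_ae (aux_ae_hasDerivAt_primitive hgint),
    ae_restrict_mem measurableSet_Ioo] with t ht htIoo
  have hF : HasDerivAt (fun τ => f 0 + ∫ s in (0:ℝ)..τ, g s) (g t) t := ht.const_add (f 0)
  have heq : (fun τ => f 0 + ∫ s in (0:ℝ)..τ, g s) =ᶠ[𝓝 t] f := by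
    filter_upwards [Ioo_mem_nhds htIoo.1 htIoo.2] with τ hτ
    exact (hFid τ (Ioo_subset_Icc_self hτ)).symm
  have := hF.congr_of_eventuallyEq heq.symm
  rwa [hg_def, indicator_of_mem htIoo] at this

section Gdiff

variable {X W : Type*} [NormedAddCommGroup X] [InnerProductSpace ℝ X] [CompleteSpace X]
  [NormedAddCommGroup W] [NormedSpace ℝ W] [CompleteSpace W]
  {G : X → W → ℝ} {Gx : X → W → X} {Gw : X → W → StrongDual ℝ W} {C₀ C₁ : ℝ}

lemma aux_tendsto_sub_punctured (s : ℝ) :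
    Tendsto (fun s' : ℝ => s' - s) (𝓝[≠] s) (𝓝[≠] (0:ℝ)) := by
  apply tendsto_nhdsWithin_of_tendsto_nhds_of_eventually_within
  · have : Tendsto (fun s' : ℝ => s' - s) (𝓝 s) (𝓝 (s - s)) :=
      (continuous_id.sub continuous_const).tendsto s
    simpa using this.mono_left nhdsWithin_le_nhds
  · filter_upwards [self_mem_nhdsWithin] with s' hs'
    exact sub_ne_zero.mpr hs'

lemma aux_lineDerivX
    (hgradxall : ∀ (x : X) (w : W), ∀ y : X,
      Tendsto (fun t : ℝ => (G (x + t • y) w - G x w) / t) (𝓝[≠] (0:ℝ)) (𝓝 ⟪Gx x w, y⟫))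
    (x y : X) (w : W) (s : ℝ) :
    HasDerivAt (fun s' : ℝ => G (x + s' • y) w) ⟪Gx (x + s • y) w, y⟫ s := by
  rw [hasDerivAt_iff_tendsto_slope]
  have h0 := (hgradxall (x + s • y) w y).comp (aux_tendsto_sub_punctured s)
  apply h0.congr'
  filter_upwards [self_mem_nhdsWithin] with s' _
  simp only [Function.comp_apply, slope_def_field]
  rw [add_assoc, ← add_smul]
  ring_nf

lemma aux_lineDerivW
    (hgradw : ∀ (x : X) (w : W) (v : W),
      Tendsto (fun t : ℝ => (G x (w + t • v) - G x w) / t) (𝓝[≠] (0:ℝ)) (𝓝 (Gw x w v)))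
    (x : X) (w v : W) (s : ℝ) :
    HasDerivAt (fun s' : ℝ => G x (w + s' • v)) (Gw x (w + s • v) v) s := by
  rw [hasDerivAt_iff_tendsto_slope]
  have h0 := (hgradw x (w + s • v) v).comp (aux_tendsto_sub_punctured s)
  apply h0.congr'
  filter_upwards [self_mem_nhdsWithin] with s' _
  simp only [Function.comp_apply, slope_def_field]
  rw [add_assoc, ← add_smul]
  ring_nf

lemma aux_contGxLine (hC₀ : 0 < C₀)
    (hlipx : ∀ (x x' : X) (w w' : W), ‖Gx x w - Gx x' w'‖ ≤ C₀ * (‖x - x'‖ + ‖w - w'‖))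
    (x y : X) (w : W) : Continuous fun s : ℝ => Gx (x + s • y) w := by
  have : LipschitzWith (Real.toNNReal (C₀ * ‖y‖)) (fun s : ℝ => Gx (x + s • y) w) := by
    apply LipschitzWith.of_dist_le_mul
    intro a b
    rw [dist_eq_norm, dist_eq_norm]
    calc ‖Gx (x + a • y) w - Gx (x + b • y) w‖
        ≤ C₀ * (‖(x + a • y) - (x + b • y)‖ + ‖w - w‖) := hlipx _ _ _ _
      _ = C₀ * ‖(a - b) • y‖ := by rw [sub_self, norm_zero, add_zero]; congr 2; module
      _ = C₀ * ‖y‖ * ‖a - b‖ := by rw [norm_smul, Real.norm_eq_abs]; ring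
      _ ≤ Real.toNNReal (C₀ * ‖y‖) * ‖a - b‖ := by
          gcongr
          exact (Real.le_coe_toNNReal _)
  exact this.continuous

lemma aux_incrX (hC₀ : 0 < C₀)
    (hgradxall : ∀ (x : X) (w : W), ∀ y : X,
      Tendsto (fun t : ℝ => (G (x + t • y) w - G x w) / t) (𝓝[≠] (0:ℝ)) (𝓝 ⟪Gx x w, y⟫))
    (hlipx : ∀ (x x' : X) (w w' : W), ‖Gx x w - Gx x' w'‖ ≤ C₀ * (‖x - x'‖ + ‖w - w'‖))
    (x h : X) (w : W) :
    |G (x + h) w - G x w - ⟪Gx x w, h⟫| ≤ C₀ * ‖h‖ ^ 2 := by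
  have hcont : Continuous fun s : ℝ => (⟪Gx (x + s • h) w, h⟫ : ℝ) :=
    (aux_contGxLine hC₀ hlipx x h w).inner continuous_const
  have key : G (x + h) w - G x w = ∫ s in (0:ℝ)..1, ⟪Gx (x + s • h) w, h⟫ := by
    have := intervalIntegral.integral_eq_sub_of_hasDerivAt
      (f := fun s : ℝ => G (x + s • h) w)
      (f' := fun s : ℝ => (⟪Gx (x + s • h) w, h⟫ : ℝ))
      (fun s _ => aux_lineDerivX hgradxall x h w s)
      (hcont.intervalIntegrable 0 1)
    rw [this]
    norm_num
  have key2 : G (x + h) w - G x w - ⟪Gx x w, h⟫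
      = ∫ s in (0:ℝ)..1, (⟪Gx (x + s • h) w - Gx x w, h⟫ : ℝ) := by
    rw [key]
    have hsplit : ∫ s in (0:ℝ)..1, (⟪Gx (x + s • h) w - Gx x w, h⟫ : ℝ)
        = (∫ s in (0:ℝ)..1, (⟪Gx (x + s • h) w, h⟫ : ℝ))
          - ∫ s in (0:ℝ)..1, (⟪Gx x w, h⟫ : ℝ) := by
      simp_rw [inner_sub_left]
      exact intervalIntegral.integral_sub (hcont.intervalIntegrable 0 1) intervalIntegrable_const
    rw [hsplit, intervalIntegral.integral_const]
    norm_num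
  rw [key2, ← Real.norm_eq_abs]
  have hbd : ∀ s ∈ Set.uIoc (0:ℝ) 1, ‖(⟪Gx (x + s • h) w - Gx x w, h⟫ : ℝ)‖ ≤ C₀ * ‖h‖ ^ 2 := by
    intro s hs
    rw [Set.uIoc_of_le (by norm_num : (0:ℝ) ≤ 1)] at hs
    calc ‖(⟪Gx (x + s • h) w - Gx x w, h⟫ : ℝ)‖
        ≤ ‖Gx (x + s • h) w - Gx x w‖ * ‖h‖ := norm_inner_le_norm _ _
      _ ≤ (C₀ * (‖(x + s • h) - x‖ + ‖w - w‖)) * ‖h‖ := by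
          gcongr; exact hlipx _ _ _ _
      _ = C₀ * (|s| * ‖h‖) * ‖h‖ := by
          rw [sub_self, norm_zero, add_zero, add_sub_cancel_left, norm_smul, Real.norm_eq_abs]
      _ ≤ C₀ * (1 * ‖h‖) * ‖h‖ := by
          gcongr
          rw [abs_of_pos hs.1]; exact hs.2
      _ = C₀ * ‖h‖ ^ 2 := by ring
  have := intervalIntegral.norm_integral_le_of_norm_le_const hbd
  simpa using this

lemma aux_incrW (hC₁ : 0 < C₁)
    (hgradw : ∀ (x : X) (w : W) (v : W),
      Tendsto (fun t : ℝ => (G x (w + t • v) - G x w) / t) (𝓝[≠] (0:ℝ)) (𝓝 (Gw x w v)))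
    (hlipw : ∀ (x x' : X) (w w' : W), ‖Gw x w - Gw x' w'‖ ≤ C₁ * (‖x - x'‖ + ‖w - w'‖))
    (x : X) (w k : W) :
    |G x (w + k) - G x w - Gw x w k| ≤ C₁ * ‖k‖ ^ 2 := by
  have hlipline : LipschitzWith (Real.toNNReal (C₁ * ‖k‖ * ‖k‖))
      (fun s : ℝ => Gw x (w + s • k) k) := by
    apply LipschitzWith.of_dist_le_mul
    intro a b
    rw [dist_eq_norm, dist_eq_norm]
    calc ‖Gw x (w + a • k) k - Gw x (w + b • k) k‖
        = ‖(Gw x (w + a • k) - Gw x (w + b • k)) k‖ := by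
          rw [ContinuousLinearMap.sub_apply]
      _ ≤ ‖Gw x (w + a • k) - Gw x (w + b • k)‖ * ‖k‖ :=
          ContinuousLinearMap.le_opNorm _ _
      _ ≤ (C₁ * (‖x - x‖ + ‖(w + a • k) - (w + b • k)‖)) * ‖k‖ := by
          gcongr; exact hlipw _ _ _ _
      _ = C₁ * ‖k‖ * ‖k‖ * ‖a - b‖ := by
          rw [sub_self, norm_zero, zero_add]
          rw [show (w + a • k) - (w + b • k) = (a - b) • k by module]
          rw [norm_smul]; ring
      _ ≤ Real.toNNReal (C₁ * ‖k‖ * ‖k‖) * ‖a - b‖ := by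
          gcongr; exact Real.le_coe_toNNReal _
  have hcont : Continuous fun s : ℝ => Gw x (w + s • k) k := hlipline.continuous
  have key : G x (w + k) - G x w = ∫ s in (0:ℝ)..1, Gw x (w + s • k) k := by
    have := intervalIntegral.integral_eq_sub_of_hasDerivAt
      (f := fun s : ℝ => G x (w + s • k))
      (f' := fun s : ℝ => Gw x (w + s • k) k)
      (fun s _ => aux_lineDerivW hgradw x w k s)
      (hcont.intervalIntegrable 0 1)
    rw [this]
    norm_num
  have key2 : G x (w + k) - G x w - Gw x w k
      = ∫ s in (0:ℝ)..1, (Gw x (w + s • k) k - Gw x w k) := by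
    rw [key]
    rw [intervalIntegral.integral_sub (hcont.intervalIntegrable 0 1) intervalIntegrable_const,
      intervalIntegral.integral_const]
    norm_num
  rw [key2, ← Real.norm_eq_abs]
  have hbd : ∀ s ∈ Set.uIoc (0:ℝ) 1, ‖Gw x (w + s • k) k - Gw x w k‖ ≤ C₁ * ‖k‖ ^ 2 := by
    intro s hs
    rw [Set.uIoc_of_le (by norm_num : (0:ℝ) ≤ 1)] at hs
    calc ‖Gw x (w + s • k) k - Gw x w k‖
        = ‖(Gw x (w + s • k) - Gw x w) k‖ := by rw [ContinuousLinearMap.sub_apply]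
      _ ≤ ‖Gw x (w + s • k) - Gw x w‖ * ‖k‖ := ContinuousLinearMap.le_opNorm _ _
      _ ≤ (C₁ * (‖x - x‖ + ‖(w + s • k) - w‖)) * ‖k‖ := by gcongr; exact hlipw _ _ _ _
      _ = C₁ * (|s| * ‖k‖) * ‖k‖ := by
          rw [sub_self, norm_zero, zero_add, add_sub_cancel_left, norm_smul, Real.norm_eq_abs]
      _ ≤ C₁ * (1 * ‖k‖) * ‖k‖ := by
          gcongr
          rw [abs_of_pos hs.1]; exact hs.2
      _ = C₁ * ‖k‖ ^ 2 := by ring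
  have := intervalIntegral.norm_integral_le_of_norm_le_const hbd
  simpa using this

lemma aux_hasFDerivAt_G (hC₀ : 0 < C₀) (hC₁ : 0 < C₁)
    (hgradxall : ∀ (x : X) (w : W), ∀ y : X,
      Tendsto (fun t : ℝ => (G (x + t • y) w - G x w) / t) (𝓝[≠] (0:ℝ)) (𝓝 ⟪Gx x w, y⟫))
    (hgradw : ∀ (x : X) (w : W) (v : W),
      Tendsto (fun t : ℝ => (G x (w + t • v) - G x w) / t) (𝓝[≠] (0:ℝ)) (𝓝 (Gw x w v)))
    (hlipx : ∀ (x x' : X) (w w' : W), ‖Gx x w - Gx x' w'‖ ≤ C₀ * (‖x - x'‖ + ‖w - w'‖))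
    (hlipw : ∀ (x x' : X) (w w' : W), ‖Gw x w - Gw x' w'‖ ≤ C₁ * (‖x - x'‖ + ‖w - w'‖))
    (x : X) (w : W) :
    HasFDerivAt (fun p : X × W => G p.1 p.2)
      ((innerSL ℝ (Gx x w)).comp (ContinuousLinearMap.fst ℝ X W)
        + (Gw x w).comp (ContinuousLinearMap.snd ℝ X W)) (x, w) := by
  rw [hasFDerivAt_iff_isLittleO_nhds_zero]
  rw [Asymptotics.isLittleO_iff]
  intro ε hε
  have hM : (0:ℝ) < 2 * C₀ + C₁ := by linarith
  have hball : Metric.ball (0 : X × W) (ε / (2 * C₀ + C₁)) ∈ 𝓝 (0 : X × W) :=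
    Metric.ball_mem_nhds _ (by positivity)
  filter_upwards [hball] with p hp
  obtain ⟨h, k⟩ := p
  simp only [Metric.mem_ball, dist_zero_right] at hp
  have hnh : ‖h‖ ≤ ‖((h, k) : X × W)‖ := norm_fst_le (h, k)
  have hnk : ‖k‖ ≤ ‖((h, k) : X × W)‖ := norm_snd_le (h, k)
  have expand : G (x + h) (w + k) - G x w
        - ((innerSL ℝ (Gx x w)).comp (ContinuousLinearMap.fst ℝ X W)
          + (Gw x w).comp (ContinuousLinearMap.snd ℝ X W)) (h, k)
      = (G (x + h) (w + k) - G x (w + k) - ⟪Gx x (w + k), h⟫)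
        + ⟪Gx x (w + k) - Gx x w, h⟫
        + (G x (w + k) - G x w - Gw x w k) := by
    simp only [ContinuousLinearMap.add_apply, ContinuousLinearMap.comp_apply,
      ContinuousLinearMap.coe_fst', ContinuousLinearMap.coe_snd', innerSL_apply_apply,
      inner_sub_left]
    ring
  have e1 := aux_incrX hC₀ hgradxall hlipx x h (w + k)
  have e2 : |(⟪Gx x (w + k) - Gx x w, h⟫ : ℝ)| ≤ C₀ * ‖k‖ * ‖h‖ := by
    calc |(⟪Gx x (w + k) - Gx x w, h⟫ : ℝ)| ≤ ‖Gx x (w + k) - Gx x w‖ * ‖h‖ :=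
          abs_real_inner_le_norm _ _
      _ ≤ (C₀ * (‖x - x‖ + ‖(w + k) - w‖)) * ‖h‖ := by gcongr; exact hlipx _ _ _ _
      _ = C₀ * ‖k‖ * ‖h‖ := by rw [sub_self, norm_zero, zero_add, add_sub_cancel_left]
  have e3 := aux_incrW hC₁ hgradw hlipw x w k
  have habs : ‖G (x + h) (w + k) - G x w
        - ((innerSL ℝ (Gx x w)).comp (ContinuousLinearMap.fst ℝ X W)
          + (Gw x w).comp (ContinuousLinearMap.snd ℝ X W)) (h, k)‖
      ≤ (2 * C₀ + C₁) * ‖((h, k) : X × W)‖ * ‖((h, k) : X × W)‖ := by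
    rw [expand, Real.norm_eq_abs]
    refine (abs_add_three _ _ _).trans ?_
    have hn : (0:ℝ) ≤ ‖((h, k) : X × W)‖ := norm_nonneg _
    have q1 : ‖h‖ ^ 2 ≤ ‖((h, k) : X × W)‖ ^ 2 := by gcongr
    have q2 : ‖k‖ ^ 2 ≤ ‖((h, k) : X × W)‖ ^ 2 := by gcongr
    have q3 : ‖k‖ * ‖h‖ ≤ ‖((h, k) : X × W)‖ * ‖((h, k) : X × W)‖ :=
      mul_le_mul hnk hnh (norm_nonneg h) hn
    have hC₀' := hC₀.le
    have hC₁' := hC₁.le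
    nlinarith [e1, e2, e3]
  refine habs.trans ?_
  have hle : (2 * C₀ + C₁) * ‖((h, k) : X × W)‖ ≤ ε := by
    have := (lt_div_iff₀' hM).mp hp
    linarith
  exact mul_le_mul_of_nonneg_right hle (norm_nonneg _)

end Gdiff

lemma aux_ae_accPt (S : Set ℝ) :
    ∀ᵐ t ∂((volume : Measure ℝ).restrict S), (𝓝[S \ {t}] t).NeBot := by
  filter_upwards [IsUnifLocDoublingMeasure.ae_tendsto_measure_inter_div
    (μ := (volume : Measure ℝ)) S 1] with t ht
  by_contra hbot
  rw [← mem_closure_iff_nhdsWithin_neBot, Metric.mem_closure_iff] at hbot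
  push_neg at hbot
  obtain ⟨ε, hε, hsep⟩ := hbot
  have htt : Tendsto (fun r : ℝ => volume (S ∩ closedBall t r) / volume (closedBall t r))
      (𝓝[>] (0:ℝ)) (𝓝 1) := by
    refine ht (fun _ => t) (fun r => r) tendsto_id ?_
    filter_upwards [self_mem_nhdsWithin] with r hr
    simp only [mem_closedBall, dist_self]
    have : (0:ℝ) < r := hr
    linarith
  have hzero : ∀ᶠ r in 𝓝[>] (0:ℝ),
      volume (S ∩ closedBall t r) / volume (closedBall t r) = 0 := by
    filter_upwards [Ioo_mem_nhdsGT_of_mem (left_mem_Ico.mpr hε)] with r hr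
    have hsub : S ∩ closedBall t r ⊆ {t} := by
      intro a ⟨haS, hab⟩
      by_contra hne
      have : a ∈ S \ {t} := ⟨haS, hne⟩
      have := hsep a this
      rw [mem_closedBall, dist_comm] at hab
      linarith [hr.2]
    have h1 : volume (S ∩ closedBall t r) = 0 :=
      le_antisymm ((measure_mono hsub).trans_eq Real.volume_singleton) (zero_le)
    rw [h1, ENNReal.zero_div]
  exact one_ne_zero (tendsto_nhds_unique (htt.congr' hzero) tendsto_const_nhds)

lemma aux_level_deriv_zero (S : Set ℝ) {h : ℝ → ℝ} (hS0 : ∀ s ∈ S, h s = 0) :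
    ∀ᵐ t ∂((volume : Measure ℝ).restrict S),
      t ∈ S → ∀ d, HasDerivAt h d t → d = 0 := by
  filter_upwards [aux_ae_accPt S] with t hacc htS d hd
  rw [hasDerivAt_iff_tendsto_slope] at hd
  have hmono : (𝓝[S \ {t}] t) ≤ 𝓝[≠] t :=
    nhdsWithin_mono t (fun s hs => hs.2)
  have h1 : Tendsto (slope h t) (𝓝[S \ {t}] t) (𝓝 d) := hd.mono_left hmono
  have h2 : Tendsto (slope h t) (𝓝[S \ {t}] t) (𝓝 0) := by
    apply Tendsto.congr' _ tendsto_const_nhds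
    filter_upwards [self_mem_nhdsWithin] with s hs
    rw [slope_def_field, hS0 s hs.1, hS0 t htS]
    simp
  exact tendsto_nhds_unique h1 h2

lemma aux_hasDerivAt_abs_zero {h : ℝ → ℝ} {t : ℝ} (h0 : h t = 0) (hd : HasDerivAt h 0 t) :
    HasDerivAt (fun s => |h s|) 0 t := by
  rw [hasDerivAt_iff_tendsto] at hd ⊢
  apply hd.congr
  intro s
  congr 1
  rw [h0]
  simp [abs_abs]

lemma aux_star_ineq {X : Type*} [NormedAddCommGroup X] [InnerProductSpace ℝ X]
    {n₁ n₂ : X} {α₁ α₂ c : ℝ} (hc : 0 < c) (hα₁ : 0 ≤ α₁) (hb : c ≤ ‖n₂‖) :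
    c * ‖α₁ • n₁ - α₂ • n₂‖ ≤
      |α₁ * ‖n₁‖ ^ 2 - α₂ * ‖n₂‖ ^ 2| + α₁ * ‖n₁‖ * ‖n₁ - n₂‖ := by
  have hA : ‖α₁ • n₁ - α₂ • n₂‖ ^ 2
      = α₁^2 * ‖n₁‖^2 + α₂^2 * ‖n₂‖^2 - 2*α₁*α₂*⟪n₁, n₂⟫ := by
    rw [← real_inner_self_eq_norm_sq]
    simp only [inner_sub_left, inner_sub_right, real_inner_smul_left, real_inner_smul_right]
    rw [real_inner_comm n₂ n₁, real_inner_self_eq_norm_sq, real_inner_self_eq_norm_sq]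
    ring
  have hD : ‖n₁ - n₂‖ ^ 2 = ‖n₁‖^2 + ‖n₂‖^2 - 2*⟪n₁, n₂⟫ := by
    rw [← real_inner_self_eq_norm_sq]
    simp only [inner_sub_left, inner_sub_right]
    rw [real_inner_comm n₂ n₁, real_inner_self_eq_norm_sq, real_inner_self_eq_norm_sq]
    ring
  have hCS : |(⟪n₁, n₁ - n₂⟫ : ℝ)| ≤ ‖n₁‖ * ‖n₁ - n₂‖ := abs_real_inner_le_norm _ _
  have hid : (⟪n₁, n₁ - n₂⟫ : ℝ) = ‖n₁‖^2 - ⟪n₁, n₂⟫ := by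
    rw [inner_sub_right, real_inner_self_eq_norm_sq]
  have hkey : ‖n₂‖^2 * ‖α₁ • n₁ - α₂ • n₂‖^2
      = (α₁ * ‖n₁‖^2 - α₂ * ‖n₂‖^2)^2 + α₁^2 * ‖n₁‖^2 * ‖n₁ - n₂‖^2
        - 2 * α₁ * (‖n₁‖^2 - ⟪n₁, n₂⟫) * (α₁ * ‖n₁‖^2 - α₂ * ‖n₂‖^2) := by
    rw [hA, hD]
    ring
  have hb0 : 0 ≤ ‖n₂‖ := hc.le.trans hb
  have hrhs0 : 0 ≤ |α₁ * ‖n₁‖ ^ 2 - α₂ * ‖n₂‖ ^ 2| + α₁ * ‖n₁‖ * ‖n₁ - n₂‖ := by positivity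
  have h1 : - (2 * α₁ * (‖n₁‖^2 - ⟪n₁, n₂⟫) * (α₁ * ‖n₁‖^2 - α₂ * ‖n₂‖^2))
      ≤ 2 * (α₁ * ‖n₁‖ * ‖n₁ - n₂‖) * |α₁ * ‖n₁‖ ^ 2 - α₂ * ‖n₂‖ ^ 2| := by
    have e1 : |2 * α₁ * (‖n₁‖^2 - ⟪n₁, n₂⟫) * (α₁ * ‖n₁‖^2 - α₂ * ‖n₂‖^2)|
        ≤ 2 * (α₁ * ‖n₁‖ * ‖n₁ - n₂‖) * |α₁ * ‖n₁‖ ^ 2 - α₂ * ‖n₂‖ ^ 2| := by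
      rw [abs_mul, abs_mul, abs_of_nonneg (by positivity : (0:ℝ) ≤ 2 * α₁), ← hid]
      calc 2 * α₁ * |(⟪n₁, n₁ - n₂⟫ : ℝ)| * |α₁ * ‖n₁‖ ^ 2 - α₂ * ‖n₂‖ ^ 2|
          ≤ 2 * α₁ * (‖n₁‖ * ‖n₁ - n₂‖) * |α₁ * ‖n₁‖ ^ 2 - α₂ * ‖n₂‖ ^ 2| := by gcongr
        _ = 2 * (α₁ * ‖n₁‖ * ‖n₁ - n₂‖) * |α₁ * ‖n₁‖ ^ 2 - α₂ * ‖n₂‖ ^ 2| := by ring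
    linarith [neg_abs_le (2 * α₁ * (‖n₁‖^2 - ⟪n₁, n₂⟫) * (α₁ * ‖n₁‖^2 - α₂ * ‖n₂‖^2)), e1]
  have hsq : (‖n₂‖ * ‖α₁ • n₁ - α₂ • n₂‖)^2
      ≤ (|α₁ * ‖n₁‖ ^ 2 - α₂ * ‖n₂‖ ^ 2| + α₁ * ‖n₁‖ * ‖n₁ - n₂‖)^2 := by
    have habs : (α₁ * ‖n₁‖^2 - α₂ * ‖n₂‖^2)^2 = |α₁ * ‖n₁‖ ^ 2 - α₂ * ‖n₂‖ ^ 2|^2 :=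
      (sq_abs _).symm
    calc (‖n₂‖ * ‖α₁ • n₁ - α₂ • n₂‖)^2 = ‖n₂‖^2 * ‖α₁ • n₁ - α₂ • n₂‖^2 := by ring
      _ = (α₁ * ‖n₁‖^2 - α₂ * ‖n₂‖^2)^2 + α₁^2 * ‖n₁‖^2 * ‖n₁ - n₂‖^2
          - 2 * α₁ * (‖n₁‖^2 - ⟪n₁, n₂⟫) * (α₁ * ‖n₁‖^2 - α₂ * ‖n₂‖^2) := hkey
      _ ≤ |α₁ * ‖n₁‖ ^ 2 - α₂ * ‖n₂‖ ^ 2|^2 + (α₁ * ‖n₁‖ * ‖n₁ - n₂‖)^2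
          + 2 * (α₁ * ‖n₁‖ * ‖n₁ - n₂‖) * |α₁ * ‖n₁‖ ^ 2 - α₂ * ‖n₂‖ ^ 2| := by
          rw [← habs]; nlinarith [h1]
      _ = (|α₁ * ‖n₁‖ ^ 2 - α₂ * ‖n₂‖ ^ 2| + α₁ * ‖n₁‖ * ‖n₁ - n₂‖)^2 := by ring
  have hble : ‖n₂‖ * ‖α₁ • n₁ - α₂ • n₂‖
      ≤ |α₁ * ‖n₁‖ ^ 2 - α₂ * ‖n₂‖ ^ 2| + α₁ * ‖n₁‖ * ‖n₁ - n₂‖ := by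
    have h2 : (0:ℝ) ≤ ‖n₂‖ * ‖α₁ • n₁ - α₂ • n₂‖ := by positivity
    exact (pow_le_pow_iff_left₀ h2 hrhs0 two_ne_zero).mp hsq
  calc c * ‖α₁ • n₁ - α₂ • n₂‖ ≤ ‖n₂‖ * ‖α₁ • n₁ - α₂ • n₂‖ := by gcongr
    _ ≤ _ := hble

lemma aux_normal_structure {X : Type*} [NormedAddCommGroup X] [InnerProductSpace ℝ X]
    {Gxw : X → ℝ} {n : X} {c C₀ : ℝ} (hc : 0 < c) (hC₀ : 0 < C₀)
    (hGcont : Continuous Gxw)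
    {x : X} (hquad : ∀ h : X, |Gxw (x + h) - Gxw x - ⟪n, h⟫| ≤ C₀ * ‖h‖ ^ 2)
    (hn : Gxw x = 1 → c ≤ ‖n‖)
    {ξ' : X} {κ : ℝ} (hκ : 0 ≤ κ)
    (hx : Gxw x ≤ 1)
    (hVI : ∀ z : X, Gxw z ≤ 1 → ⟪x - z, ξ'⟫ + κ * ‖x - z‖ ^ 2 ≥ 0) :
    ξ' = 0 ∨ (Gxw x = 1 ∧ ∃ α : ℝ, 0 ≤ α ∧ ξ' = α • n) := by
  by_cases hξ : ξ' = 0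
  · exact Or.inl hξ
  right
  have hξpos : 0 < ‖ξ'‖ := norm_pos_iff.mpr hξ
  -- Step 1 : G x w = 1
  have hGx1 : Gxw x = 1 := by
    rcases lt_or_eq_of_le hx with hlt | heq
    · exfalso
      set d : X := ‖ξ'‖⁻¹ • ξ' with hd
      have hcont0 : ContinuousAt (fun ε : ℝ => Gxw (x + ε • d)) 0 := by
        apply hGcont.continuousAt.comp
        exact (continuous_const.add (continuous_id.smul continuous_const)).continuousAt
      have hval : Gxw (x + (0:ℝ) • d) < 1 := by simpa using hlt
      have hev : ∀ᶠ ε : ℝ in 𝓝 0, Gxw (x + ε • d) < 1 := hcont0 (Iio_mem_nhds hval)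
      obtain ⟨ε₀, hε₀pos, hball⟩ := Metric.eventually_nhds_iff_ball.mp hev
      set ε : ℝ := min (ε₀ / 2) (‖ξ'‖ / (κ + 1)) with hεdef
      have hεpos : 0 < ε := by
        apply lt_min (by linarith) (by positivity)
      have hεball : ε ∈ Metric.ball (0:ℝ) ε₀ := by
        rw [Metric.mem_ball, Real.dist_eq, sub_zero, abs_of_pos hεpos]
        calc ε ≤ ε₀ / 2 := min_le_left _ _
          _ < ε₀ := by linarith
      have hz := hball ε hεball
      have hVIz := hVI (x + ε • d) hz.le
      have hxz : x - (x + ε • d) = -(ε • d) := by abel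
      rw [hxz] at hVIz
      have hinner : ⟪-(ε • d), ξ'⟫ = -(ε * ‖ξ'‖) := by
        rw [inner_neg_left, real_inner_smul_left, hd, real_inner_smul_left,
          real_inner_self_eq_norm_sq]
        field_simp
      have hnorm : ‖-(ε • d)‖ ^ 2 = ε ^ 2 := by
        rw [norm_neg, norm_smul, Real.norm_eq_abs, abs_of_pos hεpos, hd, norm_smul]
        rw [Real.norm_eq_abs, abs_inv, abs_of_pos hξpos]
        rw [inv_mul_cancel₀ hξpos.ne']
        ring
      rw [hinner, hnorm] at hVIz
      -- -(ε ‖ξ'‖) + κ ε² ≥ 0, but κ ε ≤ κ ‖ξ'‖/(κ+1) < ‖ξ'‖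
      have hκε : κ * ε < ‖ξ'‖ := by
        have h1 : ε ≤ ‖ξ'‖ / (κ + 1) := min_le_right _ _
        have h2 : κ * ε ≤ κ * (‖ξ'‖ / (κ + 1)) := by
          apply mul_le_mul_of_nonneg_left h1 hκ
        have h3 : κ * (‖ξ'‖ / (κ + 1)) < ‖ξ'‖ := by
          rw [mul_div_assoc']
          rw [div_lt_iff₀ (by linarith)]
          nlinarith
        linarith
      nlinarith [hVIz, hεpos]
    · exact heq
  refine ⟨hGx1, ?_⟩
  have hnpos : 0 < ‖n‖ := lt_of_lt_of_le hc (hn hGx1)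
  -- claim 1 : strict inward directions
  have claim1 : ∀ v : X, ⟪n, v⟫ < 0 → ⟪v, ξ'⟫ ≤ 0 := by
    intro v hnv
    set δ : ℝ := -⟪n, v⟫ with hδdef
    have hδpos : 0 < δ := by simp [hδdef]; linarith
    set s₀ : ℝ := δ / (C₀ * ‖v‖ ^ 2 + 1) with hs₀def
    have hs₀pos : 0 < s₀ := by positivity
    have hmem : ∀ s : ℝ, 0 < s → s ≤ s₀ → Gxw (x + s • v) ≤ 1 := by
      intro s hs hss₀
      have hq := hquad (s • v)
      have h1 : Gxw (x + s • v) ≤ Gxw x + ⟪n, s • v⟫ + C₀ * ‖s • v‖ ^ 2 := by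
        have := abs_le.mp hq
        linarith [this.2]
      have h2 : (⟪n, s • v⟫ : ℝ) = -(s * δ) := by
        rw [real_inner_smul_right, hδdef]; ring
      have h3 : ‖s • v‖ ^ 2 = s ^ 2 * ‖v‖ ^ 2 := by
        rw [norm_smul, Real.norm_eq_abs, mul_pow, sq_abs]
      have hsC : C₀ * (s * ‖v‖ ^ 2) ≤ δ := by
        have : s ≤ δ / (C₀ * ‖v‖ ^ 2 + 1) := by rw [← hs₀def]; exact hss₀
        have h4 : s * (C₀ * ‖v‖ ^ 2 + 1) ≤ δ := by
          rw [← le_div_iff₀ (by positivity)]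
          exact this
        nlinarith [hs.le, sq_nonneg ‖v‖]
      rw [hGx1] at h1
      rw [h2, h3] at h1
      nlinarith [hs.le]
    have hkey : ∀ s : ℝ, 0 < s → s ≤ s₀ → ⟪v, ξ'⟫ ≤ κ * s * ‖v‖ ^ 2 := by
      intro s hs hss₀
      have hVIz := hVI (x + s • v) (hmem s hs hss₀)
      have hxz : x - (x + s • v) = -(s • v) := by abel
      rw [hxz, inner_neg_left, real_inner_smul_left, norm_neg, norm_smul,
        Real.norm_eq_abs, abs_of_pos hs, mul_pow] at hVIz
      have h5 : κ * (s ^ 2 * ‖v‖ ^ 2) = s * (κ * s * ‖v‖ ^ 2) := by ring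
      nlinarith [hVIz]
    by_contra hpos
    push_neg at hpos
    set s : ℝ := min s₀ (⟪v, ξ'⟫ / (2 * (κ * ‖v‖ ^ 2 + 1))) with hsdef
    have hspos : 0 < s := lt_min hs₀pos (by positivity)
    have h6 := hkey s hspos (min_le_left _ _)
    have h7 : s ≤ ⟪v, ξ'⟫ / (2 * (κ * ‖v‖ ^ 2 + 1)) := min_le_right _ _
    have h8 : κ * s * ‖v‖ ^ 2 < ⟪v, ξ'⟫ := by
      have h9 : κ * ‖v‖ ^ 2 * s ≤ κ * ‖v‖ ^ 2 * (⟪v, ξ'⟫ / (2 * (κ * ‖v‖ ^ 2 + 1))) :=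
        mul_le_mul_of_nonneg_left h7 (by positivity)
      have h10 : κ * ‖v‖ ^ 2 * (⟪v, ξ'⟫ / (2 * (κ * ‖v‖ ^ 2 + 1))) < ⟪v, ξ'⟫ := by
        rw [mul_div_assoc']
        rw [div_lt_iff₀ (by positivity)]
        nlinarith [sq_nonneg ‖v‖]
      nlinarith
    linarith
  -- claim 2 : weak inward directions
  have claim2 : ∀ v : X, ⟪n, v⟫ ≤ 0 → ⟪v, ξ'⟫ ≤ 0 := by
    intro v hnv
    by_contra hpos
    push_neg at hpos
    set ε : ℝ := ⟪v, ξ'⟫ / (2 * (|⟪n, ξ'⟫| + 1)) with hεdef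
    have hεpos : 0 < ε := by positivity
    have hvε : ⟪n, v - ε • n⟫ < 0 := by
      rw [inner_sub_right, real_inner_smul_right, real_inner_self_eq_norm_sq]
      have : 0 < ε * ‖n‖ ^ 2 := by positivity
      linarith
    have h1 := claim1 _ hvε
    rw [inner_sub_left, real_inner_smul_left] at h1
    -- ⟪v,ξ'⟫ ≤ ε ⟪n,ξ'⟫
    have h2 : ε * ⟪n, ξ'⟫ ≤ ε * |⟪n, ξ'⟫| := by
      apply mul_le_mul_of_nonneg_left (le_abs_self _) hεpos.le
    have h3 : ε * |⟪n, ξ'⟫| < ⟪v, ξ'⟫ := by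
      rw [hεdef, div_mul_eq_mul_div, div_lt_iff₀ (by positivity)]
      nlinarith [abs_nonneg (⟪n, ξ'⟫ : ℝ)]
    linarith
  -- conclusion : ξ' is a nonneg multiple of n
  set α : ℝ := ⟪n, ξ'⟫ / ‖n‖ ^ 2 with hαdef
  have h1 : (⟪n, ξ' - α • n⟫ : ℝ) = 0 := by
    rw [inner_sub_right, real_inner_smul_right, real_inner_self_eq_norm_sq, hαdef]
    field_simp
    ring
  have h2 := claim2 _ h1.le
  have h3 : (⟪ξ' - α • n, ξ'⟫ : ℝ) = ‖ξ' - α • n‖ ^ 2 := by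
    have hdec : (⟪ξ' - α • n, ξ'⟫ : ℝ)
        = ⟪ξ' - α • n, ξ' - α • n⟫ + α * ⟪ξ' - α • n, n⟫ := by
      rw [← real_inner_smul_right]
      rw [← inner_add_right]
      congr 1
      abel
    rw [hdec, real_inner_self_eq_norm_sq, real_inner_comm, h1]
    ring
  have h4 : ‖ξ' - α • n‖ ^ 2 ≤ 0 := by rw [← h3]; exact h2
  have h4' : ‖ξ' - α • n‖ ^ 2 = 0 := le_antisymm h4 (sq_nonneg _)
  have h5 : ξ' - α • n = 0 :=
    norm_eq_zero.mp (pow_eq_zero_iff two_ne_zero |>.mp h4')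
  have hα : 0 ≤ α := by
    have h6 : (⟪n, -n⟫ : ℝ) ≤ 0 := by
      rw [inner_neg_right, real_inner_self_eq_norm_sq]
      simp [sq_nonneg]
    have h7 := claim2 _ h6
    rw [inner_neg_left, real_inner_comm] at h7
    have h8 : 0 ≤ (⟪n, ξ'⟫ : ℝ) := by
      rw [real_inner_comm]
      linarith
    positivity
  exact ⟨α, hα, by rw [← sub_eq_zero]; exact h5⟩


lemma aux_isW11_indicator {Y : Type*} [NormedAddCommGroup Y] [NormedSpace ℝ Y]
    [CompleteSpace Y] {T : ℝ} {f f' : ℝ → Y} (hf : IsW11 T f f') :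
    ∀ τ ∈ Icc (0:ℝ) T, f τ = f 0 + ∫ s in (0:ℝ)..τ, (Ioo (0:ℝ) T).indicator f' s := by
  intro τ hτ
  rw [hf.2 τ hτ]
  congr 1
  apply intervalIntegral.integral_congr_ae
  filter_upwards [measure_eq_zero_iff_ae_notMem.mp (Real.volume_singleton (a := T))] with s hs hmem
  rw [uIoc_of_le hτ.1] at hmem
  have hsIoo : s ∈ Ioo (0:ℝ) T := by
    refine ⟨hmem.1, ?_⟩
    rcases lt_or_eq_of_le (hmem.2.trans hτ.2) with h | h
    · exact h
    · exact absurd h hs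
  rw [indicator_of_mem hsIoo]

lemma aux_isW11_cont {Y : Type*} [NormedAddCommGroup Y] [NormedSpace ℝ Y]
    [CompleteSpace Y] {T : ℝ} {f f' : ℝ → Y} (hf : IsW11 T f f') :
    ∃ F : ℝ → Y, Continuous F ∧ ∀ τ ∈ Icc (0:ℝ) T, f τ = F τ := by
  refine ⟨fun τ => f 0 + ∫ s in (0:ℝ)..τ, (Ioo (0:ℝ) T).indicator f' s, ?_, aux_isW11_indicator hf⟩
  apply continuous_const.add
  exact intervalIntegral.continuous_primitive
    (fun a b => (hf.1.integrable_indicator measurableSet_Ioo).intervalIntegrable) 0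

lemma aux_ae_restrict_mono {S T' : Set ℝ} (hS : MeasurableSet S) (hT' : MeasurableSet T')
    (hsub : S ⊆ T') {P : ℝ → Prop}
    (h : ∀ᵐ t ∂((volume : Measure ℝ).restrict S), P t) :
    ∀ᵐ t ∂((volume : Measure ℝ).restrict T'), t ∈ S → P t := by
  rw [ae_iff] at h ⊢
  rw [Measure.restrict_apply' hS] at h
  rw [Measure.restrict_apply' hT']
  have hsub2 : {t | ¬(t ∈ S → P t)} ∩ T' ⊆ {t | ¬ P t} ∩ S := by
    intro t ht
    have h1 := ht.1
    push_neg at h1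
    exact ⟨h1.2, h1.1⟩
  exact le_antisymm ((measure_mono hsub2).trans h.le) (zero_le)
/-- Lemma 3.3 of the paper: comparison of two solutions of the sweeping process, where
`Aᵢ(t) = ⟪ξᵢ′(t), ∇ₓG(xᵢ(t),wᵢ(t))⟫` and
`Bᵢ(t) = ⟪uᵢ′(t), ∇ₓG(xᵢ(t),wᵢ(t))⟫ + ⟨wᵢ′(t), ∇_wG(xᵢ(t),wᵢ(t))⟩`. -/
theorem sweeping_comparison
    {X W : Type*} [NormedAddCommGroup X] [InnerProductSpace ℝ X] [CompleteSpace X]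
    [NormedAddCommGroup W] [NormedSpace ℝ W] [CompleteSpace W]
    (G : X → W → ℝ) (hGnonneg : ∀ (x : X) (w : W), 0 ≤ G x w)
    (hGlip : LocallyLipschitz (fun p : X × W => G p.1 p.2))
    (Zs : W → Set X) (hZ : ∀ w, Zs w = {z : X | G z w ≤ 1})
    (Gx : X → W → X)
    (hgradx : ∀ w : W, ∀ z ∈ Zs w, ∀ y : X,
      Tendsto (fun t : ℝ => (G (z + t • y) w - G z w) / t) (𝓝[≠] (0:ℝ)) (𝓝 ⟪Gx z w, y⟫))
    (lam c L : ℝ) (hlam : 0 < lam) (hc : 0 < c) (hL : 0 < L)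
    (μ₁ : W → ℝ → ℝ) (μ₂ : ℝ → ℝ)
    (hμ₁zero : ∀ w, μ₁ w 0 = 0) (hμ₂zero : μ₂ 0 = 0)
    (hμ₁top : ∀ w, Tendsto (μ₁ w) atTop atTop) (hμ₂top : Tendsto μ₂ atTop atTop)
    (hyp1 : ∀ (x : X) (w : W), G x w = 1 → c ≤ ‖Gx x w‖)
    (hyp2 : ∀ w : W, ∀ x ∈ Zs w, ∀ y ∈ Zs w, ‖Gx x w - Gx y w‖ ≤ μ₁ w ‖x - y‖)
    (hyp3 : ∀ w : W, ∀ x ∈ frontier (Zs w), ∀ z ∈ Zs w,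
      ⟪Gx x w - Gx z w, x - z⟫ ≥ -lam * ‖x - z‖ ^ 2)
    (hyp4 : ∀ (x : X) (w w' : W), |G x w - G x w'| ≤ L * ‖w - w'‖)
    (hyp5 : ∀ ρ > (0:ℝ), ∀ (w : W) (x : X), ρ ≤ infDist x (Zs w) → μ₂ ρ ≤ G x w - 1)
    (Gw : X → W → StrongDual ℝ W)
    (hgradxall : ∀ (x : X) (w : W), ∀ y : X,
      Tendsto (fun t : ℝ => (G (x + t • y) w - G x w) / t) (𝓝[≠] (0:ℝ)) (𝓝 ⟪Gx x w, y⟫))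
    (hgradw : ∀ (x : X) (w : W) (v : W),
      Tendsto (fun t : ℝ => (G x (w + t • v) - G x w) / t) (𝓝[≠] (0:ℝ)) (𝓝 (Gw x w v)))
    (K₀ K₁ C₀ C₁ : ℝ) (hK₀ : 0 < K₀) (hK₁ : 0 < K₁) (hC₀ : 0 < C₀) (hC₁ : 0 < C₁)
    (hbdx : ∀ (x : X) (w : W), ‖Gx x w‖ ≤ K₀)
    (hbdw : ∀ (x : X) (w : W), ‖Gw x w‖ ≤ K₁)
    (hlipx : ∀ (x x' : X) (w w' : W), ‖Gx x w - Gx x' w'‖ ≤ C₀ * (‖x - x'‖ + ‖w - w'‖))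
    (hlipw : ∀ (x x' : X) (w w' : W), ‖Gw x w - Gw x' w'‖ ≤ C₁ * (‖x - x'‖ + ‖w - w'‖))
    (T : ℝ) (hT : 0 < T)
    (u₁ u₁' u₂ u₂' : ℝ → X) (hu₁ : IsW11 T u₁ u₁') (hu₂ : IsW11 T u₂ u₂')
    (w₁ w₁' w₂ w₂' : ℝ → W) (hw₁ : IsW11 T w₁ w₁') (hw₂ : IsW11 T w₂ w₂')
    (x01 x02 : X) (hx01 : x01 ∈ Zs (w₁ 0)) (hx02 : x02 ∈ Zs (w₂ 0))
    (ξ₁ ξ₁' ξ₂ ξ₂' : ℝ → X) (hξ₁ : IsW11 T ξ₁ ξ₁') (hξ₂ : IsW11 T ξ₂ ξ₂')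
    (hsol₁ : IsGPSol T (c / lam) Zs u₁ w₁ x01 ξ₁ ξ₁')
    (hsol₂ : IsGPSol T (c / lam) Zs u₂ w₂ x02 ξ₂ ξ₂') :
    ∀ᵐ t ∂(volume.restrict (Ioo 0 T)), ∃ D : ℝ,
      HasDerivAt (fun τ => |G (u₁ τ - ξ₁ τ) (w₁ τ) - G (u₂ τ - ξ₂ τ) (w₂ τ)|) D t ∧
      |⟪ξ₁' t, Gx (u₁ t - ξ₁ t) (w₁ t)⟫ - ⟪ξ₂' t, Gx (u₂ t - ξ₂ t) (w₂ t)⟫| + D ≤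
        |(⟪u₁' t, Gx (u₁ t - ξ₁ t) (w₁ t)⟫ + Gw (u₁ t - ξ₁ t) (w₁ t) (w₁' t)) -
          (⟪u₂' t, Gx (u₂ t - ξ₂ t) (w₂ t)⟫ + Gw (u₂ t - ξ₂ t) (w₂ t) (w₂' t))| ∧
      ‖ξ₁' t - ξ₂' t‖ ≤
        1 / c * |⟪ξ₁' t, Gx (u₁ t - ξ₁ t) (w₁ t)⟫ - ⟪ξ₂' t, Gx (u₂ t - ξ₂ t) (w₂ t)⟫| +
        1 / c * (‖u₁' t‖ + K₁ / c * ‖w₁' t‖) *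
          ‖Gx (u₁ t - ξ₁ t) (w₁ t) - Gx (u₂ t - ξ₂ t) (w₂ t)‖ := by
  classical
  have hGc : Continuous (fun p : X × W => G p.1 p.2) := hGlip.continuous
  obtain ⟨U₁, hU₁c, hU₁⟩ := aux_isW11_cont hu₁
  obtain ⟨U₂, hU₂c, hU₂⟩ := aux_isW11_cont hu₂
  obtain ⟨W₁c, hW₁cc, hW₁⟩ := aux_isW11_cont hw₁
  obtain ⟨W₂c, hW₂cc, hW₂⟩ := aux_isW11_cont hw₂
  obtain ⟨Ξ₁, hΞ₁c, hΞ₁⟩ := aux_isW11_cont hξ₁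
  obtain ⟨Ξ₂, hΞ₂c, hΞ₂⟩ := aux_isW11_cont hξ₂
  set Hc : ℝ → ℝ := fun τ => G (U₁ τ - Ξ₁ τ) (W₁c τ) - G (U₂ τ - Ξ₂ τ) (W₂c τ) with hHcdef
  have hHccont : Continuous Hc := by
    apply Continuous.sub
    · exact hGc.comp ((hU₁c.sub hΞ₁c).prodMk hW₁cc)
    · exact hGc.comp ((hU₂c.sub hΞ₂c).prodMk hW₂cc)
  set S : Set ℝ := Ioo 0 T ∩ Hc ⁻¹' {0} with hSdef
  have hSmeas : MeasurableSet S :=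
    measurableSet_Ioo.inter (hHccont.measurable (measurableSet_singleton 0))
  have hHg : ∀ s ∈ Icc (0:ℝ) T,
      Hc s = G (u₁ s - ξ₁ s) (w₁ s) - G (u₂ s - ξ₂ s) (w₂ s) := by
    intro s hs
    rw [hHcdef]
    simp only
    rw [← hU₁ s hs, ← hU₂ s hs, ← hW₁ s hs, ← hW₂ s hs, ← hΞ₁ s hs, ← hΞ₂ s hs]
  have hS0 : ∀ s ∈ S,
      (fun τ => G (u₁ τ - ξ₁ τ) (w₁ τ) - G (u₂ τ - ξ₂ τ) (w₂ τ)) s = 0 := by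
    intro s hs
    have h1 : Hc s = 0 := hs.2
    rw [hHg s (Ioo_subset_Icc_self hs.1)] at h1
    exact h1
  have hF2ae := aux_ae_restrict_mono hSmeas measurableSet_Ioo inter_subset_left
    (aux_level_deriv_zero S hS0)
  filter_upwards [aux_ae_hasDerivAt_isW11 hu₁, aux_ae_hasDerivAt_isW11 hu₂,
    aux_ae_hasDerivAt_isW11 hw₁, aux_ae_hasDerivAt_isW11 hw₂,
    aux_ae_hasDerivAt_isW11 hξ₁, aux_ae_hasDerivAt_isW11 hξ₂,
    hsol₁.2.2, hsol₂.2.2, hF2ae, ae_restrict_mem measurableSet_Ioo]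
    with t hDu₁ hDu₂ hDw₁ hDw₂ hDξ₁ hDξ₂ hVI₁t hVI₂t hF2t htIoo
  have htIcc : t ∈ Icc (0:ℝ) T := Ioo_subset_Icc_self htIoo
  set x₁ : X := u₁ t - ξ₁ t with hx₁def
  set x₂ : X := u₂ t - ξ₂ t with hx₂def
  set n₁ : X := Gx x₁ (w₁ t) with hn₁def
  set n₂ : X := Gx x₂ (w₂ t) with hn₂def
  set A₁ : ℝ := ⟪ξ₁' t, n₁⟫ with hA₁def
  set A₂ : ℝ := ⟪ξ₂' t, n₂⟫ with hA₂def
  set B₁ : ℝ := ⟪u₁' t, n₁⟫ + Gw x₁ (w₁ t) (w₁' t) with hB₁def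
  set B₂ : ℝ := ⟪u₂' t, n₂⟫ + Gw x₂ (w₂ t) (w₂' t) with hB₂def
  -- membership and constraint
  have hx₁Z : x₁ ∈ Zs (w₁ t) := hsol₁.1 t htIcc
  have hx₂Z : x₂ ∈ Zs (w₂ t) := hsol₂.1 t htIcc
  have hg₁le : G x₁ (w₁ t) ≤ 1 := by rw [hZ] at hx₁Z; exact hx₁Z
  have hg₂le : G x₂ (w₂ t) ≤ 1 := by rw [hZ] at hx₂Z; exact hx₂Z
  -- chain rule
  have hx₁d : HasDerivAt (fun τ => u₁ τ - ξ₁ τ) (u₁' t - ξ₁' t) t := hDu₁.sub hDξ₁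
  have hx₂d : HasDerivAt (fun τ => u₂ τ - ξ₂ τ) (u₂' t - ξ₂' t) t := hDu₂.sub hDξ₂
  have hg₁d : HasDerivAt (fun τ => G (u₁ τ - ξ₁ τ) (w₁ τ)) (B₁ - A₁) t := by
    have hF := aux_hasFDerivAt_G hC₀ hC₁ hgradxall hgradw hlipx hlipw x₁ (w₁ t)
    have hp : HasDerivAt (fun τ => ((u₁ τ - ξ₁ τ : X), w₁ τ)) ((u₁' t - ξ₁' t, w₁' t) : X × W) t :=
      hx₁d.prodMk hDw₁
    have hcomp := hF.comp_hasDerivAt t hp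
    have hval : ((innerSL ℝ (Gx x₁ (w₁ t))).comp (ContinuousLinearMap.fst ℝ X W)
        + (Gw x₁ (w₁ t)).comp (ContinuousLinearMap.snd ℝ X W)) ((u₁' t - ξ₁' t, w₁' t) : X × W)
        = B₁ - A₁ := by
      simp only [ContinuousLinearMap.add_apply, ContinuousLinearMap.comp_apply,
        ContinuousLinearMap.coe_fst', ContinuousLinearMap.coe_snd', innerSL_apply_apply]
      rw [inner_sub_right, hB₁def, hA₁def, hn₁def]
      rw [real_inner_comm (u₁' t) (Gx x₁ (w₁ t)), real_inner_comm (ξ₁' t) (Gx x₁ (w₁ t))]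
      ring
    rw [hval] at hcomp
    exact hcomp
  have hg₂d : HasDerivAt (fun τ => G (u₂ τ - ξ₂ τ) (w₂ τ)) (B₂ - A₂) t := by
    have hF := aux_hasFDerivAt_G hC₀ hC₁ hgradxall hgradw hlipx hlipw x₂ (w₂ t)
    have hp : HasDerivAt (fun τ => ((u₂ τ - ξ₂ τ : X), w₂ τ)) ((u₂' t - ξ₂' t, w₂' t) : X × W) t :=
      hx₂d.prodMk hDw₂
    have hcomp := hF.comp_hasDerivAt t hp
    have hval : ((innerSL ℝ (Gx x₂ (w₂ t))).comp (ContinuousLinearMap.fst ℝ X W)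
        + (Gw x₂ (w₂ t)).comp (ContinuousLinearMap.snd ℝ X W)) ((u₂' t - ξ₂' t, w₂' t) : X × W)
        = B₂ - A₂ := by
      simp only [ContinuousLinearMap.add_apply, ContinuousLinearMap.comp_apply,
        ContinuousLinearMap.coe_fst', ContinuousLinearMap.coe_snd', innerSL_apply_apply]
      rw [inner_sub_right, hB₂def, hA₂def, hn₂def]
      rw [real_inner_comm (u₂' t) (Gx x₂ (w₂ t)), real_inner_comm (ξ₂' t) (Gx x₂ (w₂ t))]
      ring
    rw [hval] at hcomp
    exact hcomp
  have hgd : HasDerivAt (fun τ => G (u₁ τ - ξ₁ τ) (w₁ τ) - G (u₂ τ - ξ₂ τ) (w₂ τ))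
      ((B₁ - A₁) - (B₂ - A₂)) t := hg₁d.sub hg₂d
  -- structure of ξᵢ'
  have hstruct₁ : ξ₁' t = 0 ∨ (G x₁ (w₁ t) = 1 ∧ ∃ α : ℝ, 0 ≤ α ∧ ξ₁' t = α • n₁) := by
    apply aux_normal_structure (Gxw := fun y => G y (w₁ t)) (κ := ‖ξ₁' t‖ / (2 * (c / lam))) hc hC₀
      (hGc.comp (continuous_id.prodMk continuous_const))
      (fun h => aux_incrX hC₀ hgradxall hlipx x₁ h (w₁ t))
      (hyp1 x₁ (w₁ t))
      (div_nonneg (norm_nonneg _) (by positivity))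
      hg₁le
    intro z hz
    have := hVI₁t z (by rw [hZ]; exact hz)
    exact this
  have hstruct₂ : ξ₂' t = 0 ∨ (G x₂ (w₂ t) = 1 ∧ ∃ α : ℝ, 0 ≤ α ∧ ξ₂' t = α • n₂) := by
    apply aux_normal_structure (Gxw := fun y => G y (w₂ t)) (κ := ‖ξ₂' t‖ / (2 * (c / lam))) hc hC₀
      (hGc.comp (continuous_id.prodMk continuous_const))
      (fun h => aux_incrX hC₀ hgradxall hlipx x₂ h (w₂ t))
      (hyp1 x₂ (w₂ t))
      (div_nonneg (norm_nonneg _) (by positivity))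
      hg₂le
    intro z hz
    have := hVI₂t z (by rw [hZ]; exact hz)
    exact this
  -- A nonnegativity
  have hA₁nn : 0 ≤ A₁ := by
    rcases hstruct₁ with h0 | ⟨_, α, hα, hξ⟩
    · rw [hA₁def, h0, inner_zero_left]
    · rw [hA₁def, hξ, real_inner_smul_left]
      exact mul_nonneg hα real_inner_self_nonneg
  have hA₂nn : 0 ≤ A₂ := by
    rcases hstruct₂ with h0 | ⟨_, α, hα, hξ⟩
    · rw [hA₂def, h0, inner_zero_left]
    · rw [hA₂def, hξ, real_inner_smul_left]
      exact mul_nonneg hα real_inner_self_nonneg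
  -- F1 : on the boundary the constraint derivative vanishes
  have hF1₁ : G x₁ (w₁ t) = 1 → B₁ = A₁ := by
    intro h1
    have hmax : IsLocalMax (fun τ => G (u₁ τ - ξ₁ τ) (w₁ τ)) t := by
      filter_upwards [Ioo_mem_nhds htIoo.1 htIoo.2] with τ hτ
      have hτZ : u₁ τ - ξ₁ τ ∈ Zs (w₁ τ) := hsol₁.1 τ (Ioo_subset_Icc_self hτ)
      rw [hZ] at hτZ
      show G (u₁ τ - ξ₁ τ) (w₁ τ) ≤ G x₁ (w₁ t)
      rw [h1]
      exact hτZ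
    have := hmax.hasDerivAt_eq_zero hg₁d
    linarith [this]
  have hF1₂ : G x₂ (w₂ t) = 1 → B₂ = A₂ := by
    intro h1
    have hmax : IsLocalMax (fun τ => G (u₂ τ - ξ₂ τ) (w₂ τ)) t := by
      filter_upwards [Ioo_mem_nhds htIoo.1 htIoo.2] with τ hτ
      have hτZ : u₂ τ - ξ₂ τ ∈ Zs (w₂ τ) := hsol₂.1 τ (Ioo_subset_Icc_self hτ)
      rw [hZ] at hτZ
      show G (u₂ τ - ξ₂ τ) (w₂ τ) ≤ G x₂ (w₂ t)
      rw [h1]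
      exact hτZ
    have := hmax.hasDerivAt_eq_zero hg₂d
    linarith [this]
  -- Second inequality (independent of the case analysis for D)
  have hineq2 : ‖ξ₁' t - ξ₂' t‖ ≤ 1 / c * |A₁ - A₂|
      + 1 / c * (‖u₁' t‖ + K₁ / c * ‖w₁' t‖) * ‖n₁ - n₂‖ := by
    have hrhs2 : 0 ≤ 1 / c * (‖u₁' t‖ + K₁ / c * ‖w₁' t‖) * ‖n₁ - n₂‖ := by
      apply mul_nonneg (mul_nonneg (by positivity) ?_) (norm_nonneg _)
      have : 0 ≤ K₁ / c * ‖w₁' t‖ := by positivity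
      positivity
    have habs1 : 0 ≤ 1 / c * |A₁ - A₂| := by positivity
    rcases hstruct₁ with h₁0 | ⟨hg₁1, α₁, hα₁, hξ₁e⟩
    · rcases hstruct₂ with h₂0 | ⟨hg₂1, α₂, hα₂, hξ₂e⟩
      · rw [h₁0, h₂0]
        simpa using add_nonneg habs1 hrhs2
      · -- ξ₁' = 0, ξ₂' = α₂ • n₂
        have hb₂ : c ≤ ‖n₂‖ := hyp1 _ _ hg₂1
        have hA₁0 : A₁ = 0 := by rw [hA₁def, h₁0, inner_zero_left]
        have hA₂e : A₂ = α₂ * ‖n₂‖ ^ 2 := by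
          rw [hA₂def, hξ₂e, real_inner_smul_left, real_inner_self_eq_norm_sq]
        have hLHS : ‖ξ₁' t - ξ₂' t‖ = α₂ * ‖n₂‖ := by
          rw [h₁0, hξ₂e, zero_sub, norm_neg, norm_smul, Real.norm_eq_abs, abs_of_nonneg hα₂]
        have hkey : α₂ * ‖n₂‖ ≤ 1 / c * |A₁ - A₂| := by
          rw [hA₁0, hA₂e, zero_sub, abs_neg, abs_of_nonneg (by positivity)]
          rw [one_div, ← div_eq_inv_mul, le_div_iff₀ hc]
          nlinarith [mul_nonneg hα₂ (norm_nonneg n₂)]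
        rw [hLHS]
        linarith
    · rcases hstruct₂ with h₂0 | ⟨hg₂1, α₂, hα₂, hξ₂e⟩
      · -- ξ₁' = α₁ • n₁, ξ₂' = 0
        have hb₁ : c ≤ ‖n₁‖ := hyp1 _ _ hg₁1
        have hA₂0 : A₂ = 0 := by rw [hA₂def, h₂0, inner_zero_left]
        have hA₁e : A₁ = α₁ * ‖n₁‖ ^ 2 := by
          rw [hA₁def, hξ₁e, real_inner_smul_left, real_inner_self_eq_norm_sq]
        have hLHS : ‖ξ₁' t - ξ₂' t‖ = α₁ * ‖n₁‖ := by
          rw [h₂0, hξ₁e, sub_zero, norm_smul, Real.norm_eq_abs, abs_of_nonneg hα₁]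
        have hkey : α₁ * ‖n₁‖ ≤ 1 / c * |A₁ - A₂| := by
          rw [hA₂0, hA₁e, sub_zero, abs_of_nonneg (by positivity)]
          rw [one_div, ← div_eq_inv_mul, le_div_iff₀ hc]
          nlinarith [mul_nonneg hα₁ (norm_nonneg n₁)]
        rw [hLHS]
        linarith
      · -- both on the boundary
        have hb₁ : c ≤ ‖n₁‖ := hyp1 _ _ hg₁1
        have hb₂ : c ≤ ‖n₂‖ := hyp1 _ _ hg₂1
        have hn₁pos : 0 < ‖n₁‖ := lt_of_lt_of_le hc hb₁
        have hA₁e : A₁ = α₁ * ‖n₁‖ ^ 2 := by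
          rw [hA₁def, hξ₁e, real_inner_smul_left, real_inner_self_eq_norm_sq]
        have hA₂e : A₂ = α₂ * ‖n₂‖ ^ 2 := by
          rw [hA₂def, hξ₂e, real_inner_smul_left, real_inner_self_eq_norm_sq]
        have hB₁eq : B₁ = A₁ := hF1₁ hg₁1
        have hB₁bd : |B₁| ≤ ‖u₁' t‖ * ‖n₁‖ + K₁ * ‖w₁' t‖ := by
          rw [hB₁def]
          refine (abs_add_le _ _).trans (add_le_add ?_ ?_)
          · exact abs_real_inner_le_norm _ _
          · rw [← Real.norm_eq_abs]
            calc ‖Gw x₁ (w₁ t) (w₁' t)‖ ≤ ‖Gw x₁ (w₁ t)‖ * ‖w₁' t‖ :=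
                  ContinuousLinearMap.le_opNorm _ _
              _ ≤ K₁ * ‖w₁' t‖ := by gcongr; exact hbdw _ _
        have hαbd : α₁ * ‖n₁‖ ≤ ‖u₁' t‖ + K₁ / c * ‖w₁' t‖ := by
          have h1 : α₁ * ‖n₁‖ ^ 2 ≤ ‖u₁' t‖ * ‖n₁‖ + K₁ * ‖w₁' t‖ := by
            rw [← hA₁e, ← hB₁eq]
            exact (le_abs_self _).trans hB₁bd
          have h2 : K₁ * ‖w₁' t‖ ≤ (K₁ / c * ‖w₁' t‖) * ‖n₁‖ := by
            rw [div_mul_eq_mul_div, div_mul_eq_mul_div, le_div_iff₀ hc]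
            calc K₁ * ‖w₁' t‖ * c ≤ K₁ * ‖w₁' t‖ * ‖n₁‖ := by
                  apply mul_le_mul_of_nonneg_left hb₁ (by positivity)
              _ = K₁ * ‖w₁' t‖ * ‖n₁‖ := rfl
          have h3 : α₁ * ‖n₁‖ * ‖n₁‖ ≤ (‖u₁' t‖ + K₁ / c * ‖w₁' t‖) * ‖n₁‖ := by
            nlinarith [h1, h2]
          exact le_of_mul_le_mul_right h3 hn₁pos
        have hstar := aux_star_ineq (n₁ := n₁) (n₂ := n₂) (α₁ := α₁) (α₂ := α₂)
          hc hα₁ hb₂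
        have hLHS : ξ₁' t - ξ₂' t = α₁ • n₁ - α₂ • n₂ := by rw [hξ₁e, hξ₂e]
        rw [hLHS]
        have hd1 : ‖α₁ • n₁ - α₂ • n₂‖ ≤ (|A₁ - A₂| + α₁ * ‖n₁‖ * ‖n₁ - n₂‖) / c := by
          rw [le_div_iff₀ hc, mul_comm]
          rw [hA₁e, hA₂e]
          exact hstar
        have hd2 : (|A₁ - A₂| + α₁ * ‖n₁‖ * ‖n₁ - n₂‖) / c
            ≤ (|A₁ - A₂| + (‖u₁' t‖ + K₁ / c * ‖w₁' t‖) * ‖n₁ - n₂‖) / c := by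
          gcongr
        refine hd1.trans (hd2.trans (le_of_eq ?_))
        ring
  -- main case analysis on g₁ t vs g₂ t
  rcases lt_trichotomy (G x₁ (w₁ t)) (G x₂ (w₂ t)) with hlt | heq | hgt
  · -- g₁ t < g₂ t : then g₁ t < 1, so ξ₁' t = 0
    have hg₁lt1 : G x₁ (w₁ t) < 1 := lt_of_lt_of_le hlt hg₂le
    have hξ₁0 : ξ₁' t = 0 := by
      rcases hstruct₁ with h | ⟨hg, _⟩
      · exact h
      · exact absurd hg (ne_of_lt hg₁lt1)
    have hA₁0 : A₁ = 0 := by rw [hA₁def, hξ₁0, inner_zero_left]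
    refine ⟨(B₂ - A₂) - (B₁ - A₁), ?_, ?_, hineq2⟩
    · have hneg : (fun τ => G (u₁ τ - ξ₁ τ) (w₁ τ) - G (u₂ τ - ξ₂ τ) (w₂ τ)) t < 0 := by
        simp only
        rw [← hx₁def, ← hx₂def]
        linarith
      have hev : ∀ᶠ τ in 𝓝 t, (fun τ => G (u₁ τ - ξ₁ τ) (w₁ τ) - G (u₂ τ - ξ₂ τ) (w₂ τ)) τ < 0 :=
        hgd.continuousAt (Iio_mem_nhds hneg)
      have heqf : (fun τ => |G (u₁ τ - ξ₁ τ) (w₁ τ) - G (u₂ τ - ξ₂ τ) (w₂ τ)|)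
          =ᶠ[𝓝 t] (fun τ => -(G (u₁ τ - ξ₁ τ) (w₁ τ) - G (u₂ τ - ξ₂ τ) (w₂ τ))) := by
        filter_upwards [hev] with τ hτ
        exact abs_of_neg hτ
      have := hgd.neg.congr_of_eventuallyEq heqf
      rw [show (B₂ - A₂) - (B₁ - A₁) = -((B₁ - A₁) - (B₂ - A₂)) by ring]
      exact this
    · have h1 : |A₁ - A₂| = A₂ := by
        rw [hA₁0, zero_sub, abs_neg, abs_of_nonneg hA₂nn]
      rw [h1]
      have : A₂ + ((B₂ - A₂) - (B₁ - A₁)) = B₂ - B₁ := by rw [hA₁0]; ring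
      rw [this, abs_sub_comm]
      exact le_abs_self _
  · -- g₁ t = g₂ t
    have htS : t ∈ S := by
      refine ⟨htIoo, ?_⟩
      show Hc t = 0
      rw [hHg t htIcc, ← hx₁def, ← hx₂def, heq, sub_self]
    have hd0 := hF2t htS htS _ hgd
    refine ⟨0, ?_, ?_, hineq2⟩
    · have h0 : (fun τ => G (u₁ τ - ξ₁ τ) (w₁ τ) - G (u₂ τ - ξ₂ τ) (w₂ τ)) t = 0 := by
        simp only
        rw [← hx₁def, ← hx₂def, heq, sub_self]
      rw [hd0] at hgd
      exact aux_hasDerivAt_abs_zero h0 hgd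
    · have h1 : A₁ - A₂ = B₁ - B₂ := by linarith
      rw [h1, add_zero]
  · -- g₁ t > g₂ t : then g₂ t < 1, so ξ₂' t = 0
    have hg₂lt1 : G x₂ (w₂ t) < 1 := lt_of_lt_of_le hgt hg₁le
    have hξ₂0 : ξ₂' t = 0 := by
      rcases hstruct₂ with h | ⟨hg, _⟩
      · exact h
      · exact absurd hg (ne_of_lt hg₂lt1)
    have hA₂0 : A₂ = 0 := by rw [hA₂def, hξ₂0, inner_zero_left]
    refine ⟨(B₁ - A₁) - (B₂ - A₂), ?_, ?_, hineq2⟩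
    · have hpos : 0 < (fun τ => G (u₁ τ - ξ₁ τ) (w₁ τ) - G (u₂ τ - ξ₂ τ) (w₂ τ)) t := by
        simp only
        rw [← hx₁def, ← hx₂def]
        linarith
      have hev : ∀ᶠ τ in 𝓝 t, 0 < (fun τ => G (u₁ τ - ξ₁ τ) (w₁ τ) - G (u₂ τ - ξ₂ τ) (w₂ τ)) τ :=
        hgd.continuousAt (Ioi_mem_nhds hpos)
      have heqf : (fun τ => |G (u₁ τ - ξ₁ τ) (w₁ τ) - G (u₂ τ - ξ₂ τ) (w₂ τ)|)
          =ᶠ[𝓝 t] (fun τ => G (u₁ τ - ξ₁ τ) (w₁ τ) - G (u₂ τ - ξ₂ τ) (w₂ τ)) := by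
        filter_upwards [hev] with τ hτ
        exact abs_of_pos hτ
      exact hgd.congr_of_eventuallyEq heqf
    · have h1 : |A₁ - A₂| = A₁ := by
        rw [hA₂0, sub_zero, abs_of_nonneg hA₁nn]
      rw [h1]
      have : A₁ + ((B₁ - A₁) - (B₂ - A₂)) = B₁ - B₂ := by rw [hA₂0]; ring
      rw [this]
      exact le_abs_self _
end
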